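/- arXiv:2106.06386 — 6 statements merged into one kernel-verified Lean document; each statement's English description precedes it below -/
import Mathlib

section
/- Let n ≥ 3 and e, p ∈ {1,…,n}. Let B be a rational subspace of ℝⁿ of dimension e and F a rational subspace of ℝⁿ with B ⊆ F, and let φ : F → ℝ^p be a rational linear map (i.e. φ maps F ∩ ℚⁿ into ℚ^p) such that dim φ(B) = dim B. Then there exists a constant c(φ) > 0, depending only on φ (and not on B), such that H(φ(B)) ≤ c(φ)·H(B). -/
open scoped BigOperators ENNReal

noncomputable section

/-- A vector of `ℝⁿ` has rational coordinates. -/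
def IsRatVec {n : ℕ} (v : EuclideanSpace ℝ (Fin n)) : Prop := ∀ i, ∃ q : ℚ, v i = (q : ℝ)

/-- A vector of `ℝⁿ` has integer coordinates. -/
def IsIntVec {n : ℕ} (v : EuclideanSpace ℝ (Fin n)) : Prop := ∀ i, ∃ z : ℤ, v i = (z : ℝ)

/-- A subspace of `ℝⁿ` is rational if it is spanned by vectors with rational coordinates. -/
def IsRationalSubspace {n : ℕ} (B : Submodule ℝ (EuclideanSpace ℝ (Fin n))) : Prop :=
  ∃ S : Set (EuclideanSpace ℝ (Fin n)), (∀ v ∈ S, IsRatVec v) ∧ Submodule.span ℝ S = B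

/-- `v` is a `ℤ`-basis of the lattice `B ∩ ℤⁿ`. -/
def IsZBasisOf {n e : ℕ} (B : Submodule ℝ (EuclideanSpace ℝ (Fin n)))
    (v : Fin e → EuclideanSpace ℝ (Fin n)) : Prop :=
  (∀ i, v i ∈ B ∧ IsIntVec (v i)) ∧
    ∀ x : EuclideanSpace ℝ (Fin n), x ∈ B → IsIntVec x →
      ∃! c : Fin e → ℤ, x = ∑ i, (c i : ℝ) • v i

/-- Generalised determinant `√(det(ᵀM·M))` of a family of vectors, i.e. the norm
`‖v₁ ∧ ⋯ ∧ v_e‖` of their exterior product (square root of the Gram determinant). -/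
def gramDet {n e : ℕ} (v : Fin e → EuclideanSpace ℝ (Fin n)) : ℝ :=
  Real.sqrt (Matrix.det (Matrix.of fun i j => (inner ℝ (v i) (v j) : ℝ)))

/-- Height of a rational subspace: `√(det(ᵀM·M))` for `M` a matrix whose columns form a
`ℤ`-basis of `B ∩ ℤⁿ` (this value is independent of the chosen basis). -/
def height {n : ℕ} (B : Submodule ℝ (EuclideanSpace ℝ (Fin n))) : ℝ :=
  sSup {h : ℝ | ∃ (e : ℕ) (v : Fin e → EuclideanSpace ℝ (Fin n)), IsZBasisOf B v ∧ h = gramDet v}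

/-- `ψ(X,Y)`, the sine of the angle between `X` and `Y`. -/
def psiVec {n : ℕ} (X Y : EuclideanSpace ℝ (Fin n)) : ℝ :=
  Real.sqrt (‖X‖ ^ 2 * ‖Y‖ ^ 2 - (inner ℝ X Y : ℝ) ^ 2) / (‖X‖ * ‖Y‖)

/-- `ψⱼ(A,B)`, the `j`-th canonical angle between the subspaces `A` and `B`. -/
def psiSub {n : ℕ} (j : ℕ) (A B : Submodule ℝ (EuclideanSpace ℝ (Fin n))) : ℝ :=
  sInf {l : ℝ | 0 ≤ l ∧ ∃ Aj : Submodule ℝ (EuclideanSpace ℝ (Fin n)), Aj ≤ A ∧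
    Module.finrank ℝ Aj = j ∧ ∀ X ∈ Aj, X ≠ 0 → ∃ Y ∈ B, Y ≠ 0 ∧ psiVec X Y ≤ l}

/-- `A` is `(e,j)`-irrational: `dim (A ∩ B) < j` for every rational subspace `B` of dim `e`. -/
def IsIrrational {n : ℕ} (e j : ℕ) (A : Submodule ℝ (EuclideanSpace ℝ (Fin n))) : Prop :=
  ∀ B : Submodule ℝ (EuclideanSpace ℝ (Fin n)), IsRationalSubspace B →
    Module.finrank ℝ B = e → Module.finrank ℝ ↥(A ⊓ B) < j

/-- The exponent of approximation `μₙ(A|e)ⱼ ∈ [0,∞]`. -/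
def mu {n : ℕ} (e j : ℕ) (A : Submodule ℝ (EuclideanSpace ℝ (Fin n))) : ℝ≥0∞ :=
  sSup {x : ℝ≥0∞ | ∃ β : ℝ, 0 < β ∧ x = ENNReal.ofReal β ∧
    {B : Submodule ℝ (EuclideanSpace ℝ (Fin n)) | IsRationalSubspace B ∧
      Module.finrank ℝ B = e ∧ psiSub j A B ≤ height B ^ (-β)}.Infinite}

/-- `μ̂ₙ(d|e)ⱼ = inf {μₙ(A|e)ⱼ : A ∈ 𝔍ₙ(d,e)ⱼ}`. -/
def muHat (n d e j : ℕ) : ℝ≥0∞ :=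
  sInf (mu e j '' {A : Submodule ℝ (EuclideanSpace ℝ (Fin n)) |
    Module.finrank ℝ A = d ∧ IsIrrational e j A})




abbrev Euc (n : ℕ) := EuclideanSpace ℝ (Fin n)

def gramMat {n e : ℕ} (v : Fin e → Euc n) : Matrix (Fin e) (Fin e) ℝ :=
  Matrix.of fun i j => (inner ℝ (v i) (v j) : ℝ)

lemma inner_eq_sum {n : ℕ} (x y : Euc n) : (inner ℝ x y : ℝ) = ∑ t, x t * y t := by
  simp [PiLp.inner_apply, RCLike.inner_apply, mul_comm]

lemma gram_transform {n m e : ℕ} (v : Fin e → Euc n) (A : Matrix (Fin m) (Fin e) ℝ)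
    (w : Fin m → Euc n) (hw : ∀ j, w j = ∑ i, A j i • v i) :
    gramMat w = A * gramMat v * A.transpose := by
  ext j k
  simp only [gramMat, Matrix.of_apply, hw, Matrix.mul_apply, Matrix.transpose_apply,
    sum_inner, inner_sum, real_inner_smul_left, real_inner_smul_right,
    Finset.mul_sum, Finset.sum_mul]

  apply Finset.sum_congr rfl; intro i _
  apply Finset.sum_congr rfl; intro l _
  ring

lemma gram_psd {n e : ℕ} (v : Fin e → Euc n) : (gramMat v).PosSemidef := by
  have : gramMat v = (Matrix.of fun (t : Fin n) (i : Fin e) => v i t).conjTranspose *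
      (Matrix.of fun (t : Fin n) (i : Fin e) => v i t) := by
    ext i j
    simp [gramMat, Matrix.mul_apply, Matrix.conjTranspose_apply, inner_eq_sum]
  rw [this]
  exact Matrix.posSemidef_conjTranspose_mul_self _

lemma psd_det_nonneg {e : ℕ} {M : Matrix (Fin e) (Fin e) ℝ} (h : M.PosSemidef) :
    0 ≤ M.det := by
  rw [h.isHermitian.det_eq_prod_eigenvalues]
  exact Finset.prod_nonneg fun i _ => h.eigenvalues_nonneg i

lemma vecMul_gram {n e : ℕ} (v : Fin e → Euc n) (c : Fin e → ℝ) (j : Fin e) :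
    (Matrix.vecMul c (gramMat v)) j = (inner ℝ (∑ i, c i • v i) (v j) : ℝ) := by
  simp only [Matrix.vecMul, gramMat, dotProduct, sum_inner, real_inner_smul_left,
    Matrix.of_apply, inner_eq_sum, Finset.mul_sum, mul_assoc]

lemma gram_det_ne_zero_iff {n e : ℕ} (v : Fin e → Euc n) :
    (gramMat v).det ≠ 0 ↔ LinearIndependent ℝ v := by
  constructor
  · intro hdet
    rw [Fintype.linearIndependent_iff]
    intro c hc i
    by_contra hci
    have hc0 : c ≠ 0 := fun h => hci (congrFun h i)
    exact hdet ((Matrix.exists_vecMul_eq_zero_iff).mp ⟨c, hc0, by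
      ext j; rw [vecMul_gram, hc, inner_zero_left]; rfl⟩)
  · intro hli hdet
    obtain ⟨c, hc0, hc⟩ := (Matrix.exists_vecMul_eq_zero_iff).mpr hdet
    have hX : (inner ℝ (∑ i, c i • v i) (∑ i, c i • v i) : ℝ) = 0 := by
      rw [inner_sum]
      simp only [real_inner_smul_right]
      have : ∀ j, (inner ℝ (∑ i, c i • v i) (v j) : ℝ) = 0 := by
        intro j; rw [← vecMul_gram, hc]; rfl
      simp [this]
    have hzero : (∑ i, c i • v i) = 0 := by
      exact inner_self_eq_zero.mp hX
    have := (Fintype.linearIndependent_iff.mp hli) c hzero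
    exact hc0 (funext this)

/-- common denominator for a finite family of rationals -/
lemma rat_common_denom {ι : Type*} [Fintype ι] (r : ι → ℚ) :
    ∃ q : ℕ, 0 < q ∧ ∀ i, ∃ z : ℤ, r i * (q : ℚ) = (z : ℚ) := by
  refine ⟨∏ i, (r i).den, Finset.prod_pos fun i _ => (r i).pos, fun i => ?_⟩
  obtain ⟨k, hk⟩ := Finset.dvd_prod_of_mem (fun i => (r i).den) (Finset.mem_univ i)
  refine ⟨(r i).num * k, ?_⟩
  have hden : ((r i).den : ℚ) ≠ 0 := by exact_mod_cast (r i).pos.ne'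
  have h1 : r i * ((r i).den : ℚ) = ((r i).num : ℚ) := by
    nth_rewrite 1 [← Rat.num_div_den (r i)]
    rw [div_mul_cancel₀ _ hden]
  push_cast [hk]
  rw [← mul_assoc, h1]

lemma isIntVec_smul_of_rat {n : ℕ} {v : Euc n} (hv : IsRatVec v) :
    ∃ q : ℕ, 0 < q ∧ IsIntVec ((q : ℝ) • v) := by
  choose r hr using hv
  obtain ⟨q, hq, hz⟩ := rat_common_denom r
  refine ⟨q, hq, fun i => ?_⟩
  obtain ⟨z, hzz⟩ := hz i
  refine ⟨z, ?_⟩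
  have : ((q : ℝ) • v) i = (q : ℝ) * v i := rfl
  rw [this, hr i, ← Rat.cast_natCast, ← Rat.cast_mul, mul_comm, hzz, Rat.cast_intCast]

lemma isRatVec_of_int {n : ℕ} {v : Euc n} (hv : IsIntVec v) : IsRatVec v := by
  intro i
  obtain ⟨z, hz⟩ := hv i
  exact ⟨(z : ℚ), by rw [hz]; norm_num⟩

/-- clear denominators: from a rational family to an integer one -/
lemma rat_coeff_to_int {k : ℕ} (c : Fin k → ℚ) (hc : c ≠ 0) :
    ∃ (d : ℕ) (Z : Fin k → ℤ), 0 < d ∧ (∀ i, (Z i : ℚ) = c i * d) ∧ Z ≠ 0 := by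
  obtain ⟨d, hd, hz⟩ := rat_common_denom c
  choose Z hZ using hz
  refine ⟨d, Z, hd, fun i => (hZ i).symm, fun h0 => hc ?_⟩
  ext i
  have := hZ i
  rw [congrFun h0 i] at this
  have hd' : (d : ℚ) ≠ 0 := by positivity
  have : c i * d = 0 := by simpa using this.symm
  rcases mul_eq_zero.mp this with h | h
  · simpa using h
  · exact absurd h hd'

lemma linearIndependent_of_int {n k : ℕ} (v : Fin k → Euc n) (hint : ∀ i, IsIntVec (v i))
    (h : ∀ c : Fin k → ℤ, ∑ i, (c i : ℝ) • v i = 0 → c = 0) :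
    LinearIndependent ℝ v := by
  have hint' : ∀ i t, ∃ z : ℤ, v i t = (z : ℝ) := fun i => hint i
  choose z hz using hint'
  set G : Matrix (Fin k) (Fin k) ℚ :=
    Matrix.of (fun i j => ∑ t, (z i t : ℚ) * (z j t : ℚ)) with hG
  have hcast : G.map (Rat.cast : ℚ → ℝ) = gramMat v := by
    ext i j
    simp [hG, Matrix.map_apply, gramMat, inner_eq_sum, hz]
  have hdet : G.det ≠ 0 := by
    intro h0
    obtain ⟨c, hc0, hc⟩ := Matrix.exists_vecMul_eq_zero_iff.mpr h0
    have hj : ∀ j, (Matrix.vecMul c G) j = 0 := fun j => by rw [hc]; rfl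
    have hsq : ∑ t, (∑ i, c i * (z i t : ℚ)) ^ 2 = 0 := by
      have expand : ∑ t, (∑ i, c i * (z i t : ℚ)) ^ 2
          = ∑ j, (Matrix.vecMul c G) j * c j := by
        simp only [Matrix.vecMul, dotProduct, hG, Matrix.of_apply, Finset.sum_mul,
          Finset.mul_sum, sq]
        rw [Finset.sum_comm]
        apply Finset.sum_congr rfl; intro j _
        rw [Finset.sum_comm]
        apply Finset.sum_congr rfl; intro i _
        apply Finset.sum_congr rfl; intro t _
        ring
      rw [expand]
      simp [hj]
    have key : ∀ t, (∑ i, c i * (z i t : ℚ)) = 0 := by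
      intro t
      have := (Finset.sum_eq_zero_iff_of_nonneg (fun t _ => sq_nonneg _)).mp hsq t
        (Finset.mem_univ t)
      exact pow_eq_zero_iff (two_ne_zero) |>.mp this
    obtain ⟨d, Z, hd, hZ, hZ0⟩ := rat_coeff_to_int c hc0
    have hrel : ∑ i, (Z i : ℝ) • v i = 0 := by
      ext t
      have hq : (∑ i, (Z i : ℚ) * (z i t : ℚ)) = 0 := by
        calc (∑ i, (Z i : ℚ) * (z i t : ℚ)) = (∑ i, c i * (z i t : ℚ)) * d := by
              rw [Finset.sum_mul]
              apply Finset.sum_congr rfl; intro i _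
              rw [hZ i]; ring
          _ = 0 := by rw [key t, zero_mul]
      have h1 : (∑ i, (Z i : ℝ) • v i) t = ∑ i, (Z i : ℝ) * v i t := by
        rw [WithLp.ofLp_sum, Finset.sum_apply]
        apply Finset.sum_congr rfl; intro i _
        rw [PiLp.smul_apply, smul_eq_mul]
      have h2 : ∑ i, (Z i : ℝ) * v i t = ((∑ i, (Z i : ℚ) * (z i t : ℚ) : ℚ) : ℝ) := by
        push_cast
        apply Finset.sum_congr rfl; intro i _
        rw [hz]
      have h3 : (0 : Euc n) t = 0 := rfl
      rw [h1, h2, hq, h3, Rat.cast_zero]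
    exact hZ0 (h Z hrel)
  rw [← gram_det_ne_zero_iff, ← hcast]
  have hmap : (G.map (Rat.cast : ℚ → ℝ)).det = ((G.det : ℚ) : ℝ) := by
    rw [show G.map (Rat.cast : ℚ → ℝ) = (Rat.castHom ℝ).mapMatrix G from rfl,
      ← RingHom.map_det]
    rfl
  rw [hmap]
  exact_mod_cast hdet

/-- the lattice ℤⁿ inside ℝⁿ -/
def intLattice (n : ℕ) : Submodule ℤ (Euc n) where
  carrier := {x | IsIntVec x}
  add_mem' := by
    rintro a b ha hb i
    obtain ⟨za, hza⟩ := ha i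
    obtain ⟨zb, hzb⟩ := hb i
    exact ⟨za + zb, by push_cast [← hza, ← hzb]; rfl⟩
  zero_mem' := fun i => ⟨0, by simp⟩
  smul_mem' := by
    intro z x hx i
    obtain ⟨zx, hzx⟩ := hx i
    refine ⟨z * zx, ?_⟩
    rw [← Int.cast_smul_eq_zsmul ℝ z x, PiLp.smul_apply, smul_eq_mul, hzx]
    push_cast
    ring

lemma mem_intLattice {n : ℕ} {x : Euc n} : x ∈ intLattice n ↔ IsIntVec x := Iff.rfl

lemma single_mem_intLattice (n : ℕ) (i : Fin n) :
    EuclideanSpace.single i (1 : ℝ) ∈ intLattice n := by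
  intro t
  by_cases h : t = i
  · exact ⟨1, by rw [EuclideanSpace.single_apply, if_pos h]; norm_num⟩
  · exact ⟨0, by rw [EuclideanSpace.single_apply, if_neg h]; norm_num⟩

lemma intLattice_single_li (n : ℕ) :
    LinearIndependent ℤ (fun i => (⟨EuclideanSpace.single i (1:ℝ),
      single_mem_intLattice n i⟩ : ↥(intLattice n))) := by
  apply LinearIndependent.of_comp (intLattice n).subtype
  have h2 : LinearIndependent ℝ fun (i : Fin n) => EuclideanSpace.single i (1:ℝ) := by
    have h3 := (EuclideanSpace.basisFun (Fin n) ℝ).toBasis.linearIndependent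
    have heq : ⇑(EuclideanSpace.basisFun (Fin n) ℝ).toBasis
        = fun i => EuclideanSpace.single i (1:ℝ) := by
      funext i
      rw [OrthonormalBasis.coe_toBasis, EuclideanSpace.basisFun_apply]
    rwa [heq] at h3
  exact LinearIndependent.restrict_scalars (by intro a b hab; simpa using hab) h2

lemma intLattice_single_span (n : ℕ) :
    ⊤ ≤ Submodule.span ℤ (Set.range (fun i => (⟨EuclideanSpace.single i (1:ℝ),
      single_mem_intLattice n i⟩ : ↥(intLattice n)))) := by
  rintro ⟨x, hx⟩ -
  have hx2 : IsIntVec x := hx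
  choose z hz using hx2
  have key : (⟨x, hx⟩ : ↥(intLattice n)) = ∑ t, z t •
      (⟨EuclideanSpace.single t (1:ℝ), single_mem_intLattice n t⟩ : ↥(intLattice n)) := by
    apply Subtype.ext
    have hcoe : (((∑ t, z t • (⟨EuclideanSpace.single t (1:ℝ), single_mem_intLattice n t⟩ :
        ↥(intLattice n))) : ↥(intLattice n)) : Euc n)
        = ∑ t, z t • EuclideanSpace.single t (1:ℝ) := by
      rw [show (((∑ t, z t • (⟨EuclideanSpace.single t (1:ℝ), single_mem_intLattice n t⟩ :
        ↥(intLattice n))) : ↥(intLattice n)) : Euc n) = (intLattice n).subtype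
          (∑ t, z t • ⟨EuclideanSpace.single t (1:ℝ), single_mem_intLattice n t⟩) from rfl,
        map_sum]
      apply Finset.sum_congr rfl; intro t _
      rw [map_zsmul]
      rfl
    rw [hcoe]
    ext s
    rw [WithLp.ofLp_sum, Finset.sum_apply]
    have hterm : ∀ t, (z t • EuclideanSpace.single t (1:ℝ)) s
        = (z t : ℝ) * (if s = t then (1:ℝ) else 0) := by
      intro t
      rw [← Int.cast_smul_eq_zsmul ℝ, PiLp.smul_apply, smul_eq_mul,
        EuclideanSpace.single_apply]
    simp only [hterm, mul_ite, mul_one, mul_zero]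
    rw [Finset.sum_ite_eq Finset.univ s (fun t => (z t : ℝ))]
    simp [hz]
  rw [key]
  exact Submodule.sum_mem _ fun t _ => Submodule.smul_mem _ _ (Submodule.subset_span ⟨t, rfl⟩)

/-- ℤ-basis of the standard lattice -/
def intLatticeBasis (n : ℕ) : Module.Basis (Fin n) ℤ ↥(intLattice n) :=
  Module.Basis.mk (intLattice_single_li n) (intLattice_single_span n)

lemma zbasis_exists {n : ℕ} (B : Submodule ℝ (Euc n)) :
    ∃ (m : ℕ) (v : Fin m → Euc n), IsZBasisOf B v := by
  classical
  set LB : Submodule ℤ (Euc n) := intLattice n ⊓ B.restrictScalars ℤ with hLB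
  obtain ⟨m, bb⟩ := Submodule.basisOfPidOfLE (inf_le_left : LB ≤ intLattice n) (intLatticeBasis n)
  have hcoe : ∀ (c : Fin m → ℤ), ((∑ i, c i • bb i : ↥LB) : Euc n)
      = ∑ i, (c i : ℝ) • (bb i : Euc n) := by
    intro c
    rw [show ((∑ i, c i • bb i : ↥LB) : Euc n) = LB.subtype (∑ i, c i • bb i) from rfl, map_sum]
    apply Finset.sum_congr rfl; intro i _
    rw [map_zsmul, ← Int.cast_smul_eq_zsmul ℝ]
    rfl
  refine ⟨m, fun i => (bb i : Euc n), ?_, ?_⟩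
  · intro i
    exact ⟨(bb i).2.2, (bb i).2.1⟩
  · intro x hxB hxI
    have hxL : x ∈ LB := ⟨hxI, hxB⟩
    set xL : ↥LB := ⟨x, hxL⟩ with hxLdef
    refine ⟨fun i => bb.repr xL i, ?_, ?_⟩
    · have hsum : xL = ∑ i, bb.repr xL i • bb i := (bb.sum_repr xL).symm
      have h2 := congrArg (fun y : ↥LB => (y : Euc n)) hsum
      simpa only [hcoe] using h2
    · intro c hc
      have hceq : (∑ i, c i • bb i : ↥LB) = ∑ i, (bb.repr xL i) • bb i := by
        apply Subtype.ext
        rw [hcoe, hcoe, ← hc]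
        have hsum : xL = ∑ i, bb.repr xL i • bb i := (bb.sum_repr xL).symm
        have h2 := congrArg (fun y : ↥LB => (y : Euc n)) hsum
        simpa only [hcoe] using h2
      have hdiff : ∑ i, (c i - bb.repr xL i) • bb i = (0 : ↥LB) := by
        simp only [sub_smul, Finset.sum_sub_distrib, hceq, sub_self]
      have hli := Fintype.linearIndependent_iff.mp bb.linearIndependent
        (fun i => c i - bb.repr xL i) hdiff
      funext i
      exact sub_eq_zero.mp (hli i)




lemma gramDet_eq {n e : ℕ} (v : Fin e → Euc n) : gramDet v = Real.sqrt (gramMat v).det := rfl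

lemma zbasis_li {n k : ℕ} {B : Submodule ℝ (Euc n)} {v : Fin k → Euc n}
    (hv : IsZBasisOf B v) : LinearIndependent ℝ v := by
  apply linearIndependent_of_int v (fun i => (hv.1 i).2)
  intro c hc
  obtain ⟨c₀, hc₀, huniq⟩ := hv.2 0 (zero_mem B) (fun t => ⟨0, by simp⟩)
  have h1 := huniq c hc.symm
  have h2 := huniq 0 (by simp)
  rw [h1, ← h2]

lemma zbasis_span {n k : ℕ} {B : Submodule ℝ (Euc n)} (hB : IsRationalSubspace B)
    {v : Fin k → Euc n} (hv : IsZBasisOf B v) : Submodule.span ℝ (Set.range v) = B := by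
  apply le_antisymm
  · rw [Submodule.span_le]; rintro _ ⟨i, rfl⟩; exact (hv.1 i).1
  · obtain ⟨S, hSrat, hSspan⟩ := hB
    rw [← hSspan, Submodule.span_le]
    intro s hs
    have hsB : s ∈ B := hSspan ▸ Submodule.subset_span hs
    obtain ⟨q, hq, hint⟩ := isIntVec_smul_of_rat (hSrat s hs)
    have hqB : (q:ℝ) • s ∈ B := B.smul_mem _ hsB
    obtain ⟨c, hc, -⟩ := hv.2 _ hqB hint
    have hsrw : s = (q:ℝ)⁻¹ • ((q:ℝ) • s) := by
      rw [smul_smul, inv_mul_cancel₀ (by positivity), one_smul]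
    rw [hsrw, hc]
    exact Submodule.smul_mem _ _ (Submodule.sum_mem _ fun i _ =>
      Submodule.smul_mem _ _ (Submodule.subset_span ⟨i, rfl⟩))

lemma zbasis_card {n k : ℕ} {B : Submodule ℝ (Euc n)} (hB : IsRationalSubspace B)
    {v : Fin k → Euc n} (hv : IsZBasisOf B v) : Module.finrank ℝ B = k := by
  rw [← zbasis_span hB hv, finrank_span_eq_card (zbasis_li hv), Fintype.card_fin]

lemma zbasis_gram_eq {n k : ℕ} {B : Submodule ℝ (Euc n)} {v w : Fin k → Euc n}
    (hv : IsZBasisOf B v) (hw : IsZBasisOf B w) : (gramMat w).det = (gramMat v).det := by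
  classical
  choose A hA1 hA2 using fun j => hv.2 _ (hw.1 j).1 (hw.1 j).2
  choose C hC1 hC2 using fun i => hw.2 _ (hv.1 i).1 (hv.1 i).2
  set Az : Matrix (Fin k) (Fin k) ℤ := Matrix.of A with hAz
  set Cz : Matrix (Fin k) (Fin k) ℤ := Matrix.of C with hCz
  have hCA : Cz * Az = 1 := by
    ext i l
    have e1 : v i = ∑ l, ((∑ j, C i j * A j l : ℤ) : ℝ) • v l := by
      calc v i = ∑ j, (C i j : ℝ) • w j := hC1 i
        _ = ∑ j, (C i j : ℝ) • (∑ l, (A j l : ℝ) • v l) := by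
              apply Finset.sum_congr rfl; intro j _; rw [← hA1 j]
        _ = ∑ l, ((∑ j, C i j * A j l : ℤ) : ℝ) • v l := by
              simp only [Finset.smul_sum, smul_smul]
              rw [Finset.sum_comm]
              apply Finset.sum_congr rfl; intro l _
              rw [← Finset.sum_smul]
              congr 1
              push_cast
              rfl
    obtain ⟨c₀, -, hu⟩ := hv.2 (v i) (hv.1 i).1 (hv.1 i).2
    have h1 := hu _ e1
    have h2 := hu (fun l => if i = l then 1 else 0) (by
      simp only [Int.cast_ite, Int.cast_one, Int.cast_zero, ite_smul, one_smul, zero_smul]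
      rw [Finset.sum_ite_eq Finset.univ i v]
      simp)
    have := h1.trans h2.symm
    have h3 := congrFun this l
    simpa [Matrix.mul_apply, Matrix.one_apply, hAz, hCz] using h3
  have hunit : IsUnit Az.det := by
    have : Cz.det * Az.det = 1 := by rw [← Matrix.det_mul, hCA, Matrix.det_one]
    exact isUnit_of_mul_isUnit_right (this ▸ isUnit_one)
  have hpm : Az.det = 1 ∨ Az.det = -1 := Int.isUnit_iff.mp hunit
  set Ar : Matrix (Fin k) (Fin k) ℝ := Az.map (Int.cast : ℤ → ℝ) with hAr
  have hgram : gramMat w = Ar * gramMat v * Ar.transpose := by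
    apply gram_transform
    intro j
    rw [hA1 j]
    apply Finset.sum_congr rfl; intro i _
    rfl
  have hdetAr : Ar.det = ((Az.det : ℤ) : ℝ) := by
    rw [hAr, show Az.map (Int.cast : ℤ → ℝ) = (Int.castRingHom ℝ).mapMatrix Az from rfl,
      ← RingHom.map_det]
    rfl
  have hsq : Ar.det ^ 2 = 1 := by
    rw [hdetAr]
    rcases hpm with h | h <;> rw [h] <;> norm_num
  rw [hgram, Matrix.det_mul, Matrix.det_mul, Matrix.det_transpose]
  ring_nf
  rw [hsq, one_mul]

lemma height_eq_gramDet {n k : ℕ} {B : Submodule ℝ (Euc n)} (hB : IsRationalSubspace B)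
    {v : Fin k → Euc n} (hv : IsZBasisOf B v) : height B = gramDet v := by
  have hset : {h : ℝ | ∃ (e : ℕ) (v' : Fin e → Euc n), IsZBasisOf B v' ∧ h = gramDet v'}
      = {gramDet v} := by
    ext h
    constructor
    · rintro ⟨e', v', hv', rfl⟩
      have h1 : e' = k := by
        have := (zbasis_card hB hv').symm.trans (zbasis_card hB hv)
        exact this
      subst h1
      have := zbasis_gram_eq hv hv'
      simp only [Set.mem_singleton_iff, gramDet_eq, this]
    · rintro rfl
      exact ⟨k, v, hv, rfl⟩
  rw [height, hset, csSup_singleton]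

lemma det_abs_le_of_entries_le {k : ℕ} (M : Matrix (Fin k) (Fin k) ℝ) (b : ℝ)
    (hb : 0 ≤ b) (h : ∀ i j, |M i j| ≤ b) :
    |M.det| ≤ (k.factorial : ℝ) * b ^ k := by
  rw [Matrix.det_apply]
  refine le_trans (Finset.abs_sum_le_sum_abs _ _) ?_
  have hterm : ∀ σ : Equiv.Perm (Fin k), |Equiv.Perm.sign σ • ∏ i, M (σ i) i| ≤ b ^ k := by
    intro σ
    have h1 : |Equiv.Perm.sign σ • ∏ i, M (σ i) i| = |∏ i, M (σ i) i| := by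
      rcases Int.units_eq_one_or (Equiv.Perm.sign σ) with hs | hs <;> rw [hs] <;> simp
    rw [h1, Finset.abs_prod]
    calc ∏ i, |M (σ i) i| ≤ ∏ (_ : Fin k), b :=
          Finset.prod_le_prod (fun i _ => abs_nonneg _) (fun i _ => h _ _)
      _ = b ^ k := by rw [Finset.prod_const, Finset.card_univ, Fintype.card_fin]
  calc ∑ σ : Equiv.Perm (Fin k), |Equiv.Perm.sign σ • ∏ i, M (σ i) i|
      ≤ ∑ (_ : Equiv.Perm (Fin k)), b ^ k := Finset.sum_le_sum fun σ _ => hterm σ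
    _ = (k.factorial : ℝ) * b ^ k := by
        rw [Finset.sum_const, Finset.card_univ, Fintype.card_perm, nsmul_eq_mul,
          Fintype.card_fin]

lemma gram_phi_bound {n p e : ℕ} (F : Submodule ℝ (Euc n)) (φ : F →ₗ[ℝ] Euc p)
    {B : Submodule ℝ (Euc n)} (hBF : B ≤ F) (hrank : Module.finrank ℝ B = e)
    (v : Fin e → Euc n) (hvB : ∀ i, v i ∈ B) :
    (gramMat (fun i => (φ ⟨v i, hBF (hvB i)⟩ : Euc p))).det ≤
      ((e.factorial : ℝ) * (max 1 (‖LinearMap.toContinuousLinearMap φ‖ ^ 2)) ^ e)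
        * (gramMat v).det := by
  classical
  set φL := LinearMap.toContinuousLinearMap φ with hφL
  set b : ℝ := max 1 (‖φL‖ ^ 2) with hbdef
  have hb1 : (1:ℝ) ≤ b := le_max_left _ _
  have hb0 : (0:ℝ) ≤ b := le_trans zero_le_one hb1
  set oB : OrthonormalBasis (Fin e) ℝ ↥B :=
    (stdOrthonormalBasis ℝ ↥B).reindex (finCongr hrank) with hoB
  set u : Fin e → Euc n := fun k => ((oB k : ↥B) : Euc n) with hu
  set M : Matrix (Fin e) (Fin e) ℝ := Matrix.of fun i k => oB.repr ⟨v i, hvB i⟩ k with hM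
  have hMv : ∀ i, v i = ∑ k, M i k • u k := by
    intro i
    have h1 : (⟨v i, hvB i⟩ : ↥B) = ∑ k, oB.repr ⟨v i, hvB i⟩ k • oB k :=
      (oB.sum_repr ⟨v i, hvB i⟩).symm
    have h2 := congrArg (fun y : ↥B => (y : Euc n)) h1
    simp only [Submodule.coe_sum, SetLike.val_smul] at h2
    exact h2
  have hgramu : gramMat u = 1 := by
    ext k l
    have := oB.orthonormal
    rw [orthonormal_iff_ite] at this
    have hinner : (inner ℝ (u k) (u l) : ℝ) = (inner ℝ (oB k) (oB l) : ℝ) := rfl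
    simp only [gramMat, Matrix.of_apply, hinner, this, Matrix.one_apply]
  have hgramv : gramMat v = M * M.transpose := by
    have := gram_transform u M v hMv
    rw [this, hgramu, Matrix.mul_one]
  -- now the image family
  set uF : Fin e → ↥F := fun k => ⟨u k, hBF (oB k).2⟩ with huF
  set w : Fin e → Euc p := fun k => (φ (uF k) : Euc p) with hw
  have hφv : ∀ i, (φ ⟨v i, hBF (hvB i)⟩ : Euc p) = ∑ k, M i k • w k := by
    intro i
    have h1 : (⟨v i, hBF (hvB i)⟩ : ↥F) = ∑ k, M i k • uF k := by
      apply Subtype.ext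
      simp only [Submodule.coe_sum, SetLike.val_smul]
      exact hMv i
    rw [h1, map_sum]
    simp only [map_smul]
    rfl
  have hgramφ : gramMat (fun i => (φ ⟨v i, hBF (hvB i)⟩ : Euc p))
      = M * gramMat w * M.transpose := gram_transform w M _ hφv
  -- entries of gramMat w bounded by b
  have hwnorm : ∀ k, ‖w k‖ ≤ ‖φL‖ := by
    intro k
    have h1 : w k = φL (uF k) := by rw [hw, hφL]; rfl
    rw [h1]
    have := φL.le_opNorm (uF k)
    have hnu : ‖uF k‖ = 1 := by
      have h2 : ‖uF k‖ = ‖u k‖ := rfl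
      have h3 : ‖u k‖ = ‖oB k‖ := rfl
      rw [h2, h3, oB.orthonormal.1 k]
    rw [hnu, mul_one] at this
    exact this
  have hentries : ∀ k l, |gramMat w k l| ≤ b := by
    intro k l
    have h1 : |gramMat w k l| ≤ ‖w k‖ * ‖w l‖ := by
      rw [show gramMat w k l = (inner ℝ (w k) (w l) : ℝ) from rfl]
      exact abs_real_inner_le_norm _ _
    have h2 : ‖w k‖ * ‖w l‖ ≤ ‖φL‖ * ‖φL‖ :=
      mul_le_mul (hwnorm k) (hwnorm l) (norm_nonneg _) (norm_nonneg φL)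
    calc |gramMat w k l| ≤ ‖φL‖ * ‖φL‖ := le_trans h1 h2
      _ = ‖φL‖ ^ 2 := (sq ‖φL‖).symm
      _ ≤ b := le_max_right _ _
  have hdetw : (gramMat w).det ≤ (e.factorial : ℝ) * b ^ e :=
    le_trans (le_abs_self _) (det_abs_le_of_entries_le _ b hb0 hentries)
  have hdetv : (gramMat v).det = M.det ^ 2 := by
    rw [hgramv, Matrix.det_mul, Matrix.det_transpose, sq]
  rw [hgramφ, Matrix.det_mul, Matrix.det_mul, Matrix.det_transpose]
  calc M.det * (gramMat w).det * M.det = (gramMat w).det * M.det ^ 2 := by ring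
    _ ≤ ((e.factorial : ℝ) * b ^ e) * M.det ^ 2 := by
        apply mul_le_mul_of_nonneg_right hdetw (sq_nonneg _)
    _ = ((e.factorial : ℝ) * b ^ e) * (gramMat v).det := by rw [hdetv]

lemma exists_denom {n p : ℕ} (F : Submodule ℝ (Euc n)) (φ : F →ₗ[ℝ] Euc p)
    (hφ : ∀ x : F, IsRatVec (x : Euc n) → IsRatVec (φ x)) :
    ∃ q : ℕ, 0 < q ∧ ∀ (x : Euc n) (hx : x ∈ F), IsIntVec x →
      IsIntVec ((q : ℝ) • (φ ⟨x, hx⟩ : Euc p)) := by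
  obtain ⟨f, u, hu⟩ := zbasis_exists F
  have hrat' : ∀ ij : Fin f × Fin p,
      ∃ r : ℚ, (φ ⟨u ij.1, (hu.1 ij.1).1⟩ : Euc p) ij.2 = (r : ℝ) :=
    fun ij => hφ ⟨u ij.1, (hu.1 ij.1).1⟩ (isRatVec_of_int (hu.1 ij.1).2) ij.2
  choose r hr using hrat'
  obtain ⟨q, hq, hz⟩ := rat_common_denom r
  refine ⟨q, hq, ?_⟩
  intro x hx hxi
  obtain ⟨c, hc, -⟩ := hu.2 x hx hxi
  have hlift : (⟨x, hx⟩ : ↥F) = ∑ i, (c i : ℝ) • (⟨u i, (hu.1 i).1⟩ : ↥F) := by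
    apply Subtype.ext
    simp only [Submodule.coe_sum, SetLike.val_smul]
    exact hc
  have hφx : (φ ⟨x, hx⟩ : Euc p) = ∑ i, (c i : ℝ) • (φ ⟨u i, (hu.1 i).1⟩ : Euc p) := by
    rw [hlift, map_sum]
    simp only [map_smul]
  intro j
  choose z hzz using fun i => hz (i, j)
  refine ⟨∑ i, c i * z i, ?_⟩
  have h1 : ((q:ℝ) • (φ ⟨x, hx⟩ : Euc p)) j = (q:ℝ) * ((φ ⟨x, hx⟩ : Euc p)) j := by
    rw [PiLp.smul_apply, smul_eq_mul]
  have h2 : ((φ ⟨x, hx⟩ : Euc p)) j = ∑ i, (c i : ℝ) * ((r (i, j) : ℚ) : ℝ) := by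
    rw [hφx, WithLp.ofLp_sum, Finset.sum_apply]
    apply Finset.sum_congr rfl; intro i _
    rw [PiLp.smul_apply, smul_eq_mul, hr (i, j)]
  rw [h1, h2, Finset.mul_sum]
  push_cast
  apply Finset.sum_congr rfl; intro i _
  have hcast : ((r (i, j) : ℚ) : ℝ) * (q : ℝ) = ((z i : ℤ) : ℝ) := by
    have := congrArg (fun a : ℚ => (a : ℝ)) (hzz i)
    push_cast at this
    exact this
  calc (q : ℝ) * ((c i : ℝ) * ((r (i, j) : ℚ) : ℝ))
      = (c i : ℝ) * (((r (i, j) : ℚ) : ℝ) * (q : ℝ)) := by ring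
    _ = (c i : ℝ) * ((z i : ℤ) : ℝ) := by rw [hcast]

theorem mainthm (n e p : ℕ)
    (F : Submodule ℝ (EuclideanSpace ℝ (Fin n))) (hF : IsRationalSubspace F)
    (φ : F →ₗ[ℝ] EuclideanSpace ℝ (Fin p))
    (hφ : ∀ x : F, IsRatVec (x : EuclideanSpace ℝ (Fin n)) → IsRatVec (φ x)) :
    ∃ c > 0, ∀ B : Submodule ℝ (EuclideanSpace ℝ (Fin n)),
      IsRationalSubspace B → Module.finrank ℝ B = e → B ≤ F →
      Module.finrank ℝ ↥(Submodule.map φ (B.comap F.subtype)) = Module.finrank ℝ B →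
      height (Submodule.map φ (B.comap F.subtype)) ≤ c * height B := by
  classical
  obtain ⟨q, hq0, hqint⟩ := exists_denom F φ hφ
  set φL := LinearMap.toContinuousLinearMap φ with hφL
  set Cφ : ℝ := (e.factorial : ℝ) * (max 1 (‖φL‖ ^ 2)) ^ e with hCφ
  have hCφpos : 0 < Cφ := by
    apply mul_pos
    · exact_mod_cast Nat.factorial_pos e
    · apply pow_pos; exact lt_of_lt_of_le one_pos (le_max_left _ _)
  set K : ℝ := ((q : ℝ) * (q : ℝ)) ^ e * Cφ with hK
  have hq0' : (0:ℝ) < (q:ℝ) := by exact_mod_cast hq0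
  have hKpos : 0 < K := mul_pos (pow_pos (mul_pos hq0' hq0') e) hCφpos
  refine ⟨Real.sqrt K, Real.sqrt_pos.mpr hKpos, ?_⟩
  intro B hB hrankB hBF hrankB'
  obtain ⟨m, v, hv⟩ := zbasis_exists B
  have hm : e = m := by rw [← hrankB, zbasis_card hB hv]
  subst hm
  set vF : Fin e → ↥F := fun i => ⟨v i, hBF (hv.1 i).1⟩ with hvF
  set φv : Fin e → Euc p := fun i => (φ (vF i) : Euc p) with hφv
  -- identification of B' as a span
  have hspanB : Submodule.span ℝ (Set.range v) = B := zbasis_span hB hv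
  have hcomap : B.comap F.subtype = Submodule.span ℝ (Set.range vF) := by
    apply Submodule.map_injective_of_injective (Submodule.injective_subtype F)
    rw [Submodule.map_comap_subtype, inf_eq_right.mpr hBF, Submodule.map_span]
    have : F.subtype '' Set.range vF = Set.range v := by
      rw [← Set.range_comp]
      rfl
    rw [this, hspanB]
  have hB' : Submodule.map φ (B.comap F.subtype) = Submodule.span ℝ (Set.range φv) := by
    rw [hcomap, Submodule.map_span, ← Set.range_comp]
    rfl
  set B' := Submodule.map φ (B.comap F.subtype) with hB'def
  have hratB' : IsRationalSubspace B' := by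
    refine ⟨Set.range φv, ?_, hB'.symm⟩
    rintro _ ⟨i, rfl⟩
    exact hφ (vF i) (isRatVec_of_int (hv.1 i).2)
  have hrkB' : Module.finrank ℝ B' = e := by rw [hrankB', hrankB]
  -- linear independence of φv
  have hindepφv : LinearIndependent ℝ φv := by
    rw [linearIndependent_iff_card_eq_finrank_span]
    have : (Set.range φv).finrank ℝ = Module.finrank ℝ B' := by
      rw [Set.finrank, ← hB']
    rw [this, hrkB', Fintype.card_fin]
  have hdetφv : (gramMat φv).det ≠ 0 := (gram_det_ne_zero_iff φv).mpr hindepφv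
  -- bound on gram of φv
  have hφbound : (gramMat φv).det ≤ Cφ * (gramMat v).det := by
    have := gram_phi_bound F φ hBF hrankB v (fun i => (hv.1 i).1)
    rw [hCφ, hφL]
    convert this using 3
  -- scaled family
  set qφv : Fin e → Euc p := fun i => (q : ℝ) • φv i with hqφv
  have hgramq : gramMat qφv = ((q:ℝ) * (q:ℝ)) • gramMat φv := by
    ext i j
    show (inner ℝ ((q:ℝ) • φv i) ((q:ℝ) • φv j) : ℝ) = ((q:ℝ) * (q:ℝ)) * (inner ℝ (φv i) (φv j) : ℝ)
    rw [real_inner_smul_left, real_inner_smul_right]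
    ring
  have hdetq : (gramMat qφv).det = ((q:ℝ) * (q:ℝ)) ^ e * (gramMat φv).det := by
    rw [hgramq, Matrix.det_smul, Fintype.card_fin]
  have hdetqne : (gramMat qφv).det ≠ 0 := by
    rw [hdetq]
    exact mul_ne_zero (pow_ne_zero _ (by positivity)) hdetφv
  have hqφvmem : ∀ i, qφv i ∈ B' ∧ IsIntVec (qφv i) := by
    intro i
    constructor
    · apply Submodule.smul_mem
      exact Submodule.mem_map_of_mem ((hv.1 i).1 : (vF i : Euc n) ∈ B)
    · exact hqint (v i) (hBF (hv.1 i).1) (hv.1 i).2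
  -- bound every element of the height set of B'
  have hbound : ∀ h ∈ {h : ℝ | ∃ (e' : ℕ) (w : Fin e' → Euc p),
      IsZBasisOf B' w ∧ h = gramDet w}, h ≤ Real.sqrt K * gramDet v := by
    rintro h ⟨e', w, hw, rfl⟩
    have he' : e = e' := by rw [← hrkB', zbasis_card hratB' hw]
    subst he'
    choose D hD1 hD2 using fun i => hw.2 (qφv i) (hqφvmem i).1 (hqφvmem i).2
    set Dr : Matrix (Fin e) (Fin e) ℝ := (Matrix.of D).map (Int.cast : ℤ → ℝ) with hDr
    have hgr : gramMat qφv = Dr * gramMat w * Dr.transpose := by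
      apply gram_transform
      intro i
      rw [hD1 i]
      apply Finset.sum_congr rfl; intro j _
      rfl
    have hdet2 : (gramMat qφv).det = Dr.det ^ 2 * (gramMat w).det := by
      rw [hgr, Matrix.det_mul, Matrix.det_mul, Matrix.det_transpose]
      ring
    have hDrcast : Dr.det = (((Matrix.of D).det : ℤ) : ℝ) := by
      rw [hDr, show (Matrix.of D).map (Int.cast : ℤ → ℝ)
        = (Int.castRingHom ℝ).mapMatrix (Matrix.of D) from rfl, ← RingHom.map_det]
      rfl
    have hDzne : (Matrix.of D).det ≠ 0 := by
      intro h0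
      apply hdetqne
      rw [hdet2, hDrcast, h0]
      norm_num
    have hone : (1:ℝ) ≤ Dr.det ^ 2 := by
      rw [hDrcast]
      have h1 : (1:ℤ) ≤ ((Matrix.of D).det) ^ 2 := by
        have := Int.one_le_abs (by exact hDzne)
        calc (1:ℤ) = 1 * 1 := by ring
          _ ≤ |(Matrix.of D).det| * |(Matrix.of D).det| := mul_le_mul this this one_pos.le (abs_nonneg _)
          _ = (Matrix.of D).det ^ 2 := by rw [← abs_mul, abs_mul_self, sq]
      exact_mod_cast h1
    have hwnonneg : 0 ≤ (gramMat w).det := psd_det_nonneg (gram_psd w)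
    have hchain : (gramMat w).det ≤ K * (gramMat v).det := by
      calc (gramMat w).det = 1 * (gramMat w).det := (one_mul _).symm
        _ ≤ Dr.det ^ 2 * (gramMat w).det := mul_le_mul_of_nonneg_right hone hwnonneg
        _ = (gramMat qφv).det := hdet2.symm
        _ = ((q:ℝ) * (q:ℝ)) ^ e * (gramMat φv).det := hdetq
        _ ≤ ((q:ℝ) * (q:ℝ)) ^ e * (Cφ * (gramMat v).det) :=
            mul_le_mul_of_nonneg_left hφbound (by positivity)
        _ = K * (gramMat v).det := by rw [hK]; ring
    rw [gramDet_eq, gramDet_eq]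
    calc Real.sqrt (gramMat w).det ≤ Real.sqrt (K * (gramMat v).det) :=
          Real.sqrt_le_sqrt hchain
      _ = Real.sqrt K * Real.sqrt (gramMat v).det := Real.sqrt_mul hKpos.le _
  have hheightB : height B = gramDet v := height_eq_gramDet hB hv
  have hfinal : height B' ≤ Real.sqrt K * gramDet v := by
    apply Real.sSup_le hbound
    apply mul_nonneg (Real.sqrt_nonneg _)
    rw [gramDet_eq]
    exact Real.sqrt_nonneg _
  rw [hheightB]
  exact hfinal


/-- **Lemma 2.4.** For a rational linear map `φ : F → ℝᵖ`, there is a constant `c(φ) > 0`,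
depending only on `φ`, such that `H(φ(B)) ≤ c(φ)·H(B)` for every rational subspace `B ⊆ F`
of dimension `e` with `dim φ(B) = dim B`. -/
theorem statement6 (n e p : ℕ) (hn : 3 ≤ n) (he1 : 1 ≤ e) (hen : e ≤ n)
    (hp1 : 1 ≤ p) (hpn : p ≤ n)
    (F : Submodule ℝ (EuclideanSpace ℝ (Fin n))) (hF : IsRationalSubspace F)
    (φ : F →ₗ[ℝ] EuclideanSpace ℝ (Fin p))
    (hφ : ∀ x : F, IsRatVec (x : EuclideanSpace ℝ (Fin n)) → IsRatVec (φ x)) :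
    ∃ c > 0, ∀ B : Submodule ℝ (EuclideanSpace ℝ (Fin n)),
      IsRationalSubspace B → Module.finrank ℝ B = e → B ≤ F →
      Module.finrank ℝ ↥(Submodule.map φ (B.comap F.subtype)) = Module.finrank ℝ B →
      height (Submodule.map φ (B.comap F.subtype)) ≤ c * height B := by
  exact mainthm n e p F hF φ hφ

end
end

section
/- Let F be a subspace of ℝⁿ, p_F the orthogonal projection of ℝⁿ onto F, and A a subspace of F with dim A ≥ j. Let 𝓡 be a non-empty subset of ℝⁿ∖{0} with 𝓡 ∩ F^⊥ = ∅ and suppose there is a constant c > 0 such that ‖p_F(X)‖ ≥ c‖X‖ for all X ∈ 𝓡. Let D be a subspace of ℝⁿ with dim D ≥ j and D ⊆ 𝓡 ∪ {0}. Then ψ_j(A, D) ≥ c'·ψ_j(A, p_F(D)), where c' > 0 depends only on c (one may take c' = √(c/2)). -/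
open scoped BigOperators ENNReal

noncomputable section

private lemma key_real7 (c a b s x : ℝ) (hc : 0 < c) (hc1 : c ≤ 1) (hx : 0 < x) (ha : 0 < a)
    (hab : a ≤ b) (hs : s ^ 2 ≤ x ^ 2 * a ^ 2) :
    Real.sqrt (x ^ 2 * a ^ 2 - s ^ 2) / (x * a) ≤
      Real.sqrt (2 / c) * (Real.sqrt (x ^ 2 * b ^ 2 - s ^ 2) / (x * b)) := by
  have hb : 0 < b := lt_of_lt_of_le ha hab
  have hu : 0 ≤ x ^ 2 * a ^ 2 - s ^ 2 := by linarith
  have hb2 : a ^ 2 ≤ b ^ 2 := by nlinarith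
  have hx2 : x ^ 2 * a ^ 2 ≤ x ^ 2 * b ^ 2 := mul_le_mul_of_nonneg_left hb2 (sq_nonneg x)
  have hv : 0 ≤ x ^ 2 * b ^ 2 - s ^ 2 := by linarith
  have huv : x ^ 2 * a ^ 2 - s ^ 2 ≤ x ^ 2 * b ^ 2 - s ^ 2 := by linarith
  have hkey : c * ((x ^ 2 * a ^ 2 - s ^ 2) * (x * b) ^ 2) ≤
      2 * ((x ^ 2 * b ^ 2 - s ^ 2) * (x * a) ^ 2) := by
    rcases le_or_gt (s ^ 2) ((1 - c / 2) * (x ^ 2 * b ^ 2)) with h | h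
    · have h3 : c / 2 * (x ^ 2 * b ^ 2) ≤ x ^ 2 * b ^ 2 - s ^ 2 := by linarith
      nlinarith [mul_le_mul_of_nonneg_left h3
          (mul_nonneg (by norm_num : (0:ℝ) ≤ 2) (sq_nonneg (x * a))),
        mul_le_mul_of_nonneg_right
          (show x ^ 2 * a ^ 2 - s ^ 2 ≤ x ^ 2 * a ^ 2 by nlinarith [sq_nonneg s])
          (mul_nonneg hc.le (sq_nonneg (x * b)))]
    · have h2 : x ^ 2 * b ^ 2 ≤ 2 * (x ^ 2 * a ^ 2) := by nlinarith
      nlinarith [mul_le_mul_of_nonneg_right huv (sq_nonneg (x * b)),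
        mul_le_mul_of_nonneg_left h2 hv,
        mul_nonneg (sub_nonneg.2 hc1) (mul_nonneg hu (sq_nonneg (x * b)))]
  have hkey' : (x ^ 2 * a ^ 2 - s ^ 2) * (x * b) ^ 2 ≤
      2 / c * ((x ^ 2 * b ^ 2 - s ^ 2) * (x * a) ^ 2) := by
    rw [div_mul_eq_mul_div, le_div_iff₀ hc]
    linarith [hkey]
  have h1 := Real.sqrt_le_sqrt hkey'
  rw [Real.sqrt_mul hu, Real.sqrt_mul (by positivity : (0:ℝ) ≤ 2 / c),
    Real.sqrt_mul hv, Real.sqrt_sq (by positivity : (0:ℝ) ≤ x * b),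
    Real.sqrt_sq (by positivity : (0:ℝ) ≤ x * a)] at h1
  rw [mul_div_assoc', div_le_div_iff₀ (by positivity) (by positivity)]
  calc Real.sqrt (x ^ 2 * a ^ 2 - s ^ 2) * (x * b)
      ≤ Real.sqrt (2 / c) * (Real.sqrt (x ^ 2 * b ^ 2 - s ^ 2) * (x * a)) := h1
    _ = Real.sqrt (2 / c) * Real.sqrt (x ^ 2 * b ^ 2 - s ^ 2) * (x * a) := by ring

private lemma psiVec_le_one7 {n : ℕ} (X Y : EuclideanSpace ℝ (Fin n)) : psiVec X Y ≤ 1 := by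
  unfold psiVec
  rcases eq_or_ne (‖X‖ * ‖Y‖) 0 with h | h
  · simp [h]
  · have hpos : 0 < ‖X‖ * ‖Y‖ := lt_of_le_of_ne (by positivity) (Ne.symm h)
    rw [div_le_one hpos]
    calc Real.sqrt (‖X‖ ^ 2 * ‖Y‖ ^ 2 - (inner ℝ X Y : ℝ) ^ 2)
        ≤ Real.sqrt ((‖X‖ * ‖Y‖) ^ 2) :=
          Real.sqrt_le_sqrt (by nlinarith [sq_nonneg (inner ℝ X Y : ℝ)])
      _ = ‖X‖ * ‖Y‖ := Real.sqrt_sq hpos.le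

private lemma psi_proj7 {n : ℕ} (F : Submodule ℝ (EuclideanSpace ℝ (Fin n))) (c : ℝ) (hc : 0 < c)
    (hc1 : c ≤ 1) (X Y : EuclideanSpace ℝ (Fin n)) (hX : X ∈ F) (hX0 : X ≠ 0) (hY0 : Y ≠ 0)
    (hca : c * ‖Y‖ ≤ ‖(Submodule.orthogonalProjection F Y : EuclideanSpace ℝ (Fin n))‖) :
    psiVec X (Submodule.orthogonalProjection F Y : EuclideanSpace ℝ (Fin n)) ≤
      Real.sqrt (2 / c) * psiVec X Y := by
  set Z : EuclideanSpace ℝ (Fin n) := (Submodule.orthogonalProjection F Y : EuclideanSpace ℝ (Fin n)) with hZ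
  have hab : ‖Z‖ ≤ ‖Y‖ := by
    have h1 := (Submodule.orthogonalProjection F).le_opNorm Y
    have h2 := Submodule.orthogonalProjectionOnto_norm_le F
    have h3 : ‖Z‖ = ‖Submodule.orthogonalProjection F Y‖ := by simp [hZ]
    have h4 : ‖Submodule.orthogonalProjection F‖ * ‖Y‖ ≤ 1 * ‖Y‖ :=
      mul_le_mul_of_nonneg_right h2 (norm_nonneg Y)
    rw [h3]; linarith
  have hinner : (inner ℝ X Y : ℝ) = (inner ℝ X Z : ℝ) := by
    have h0 := Submodule.starProjection_inner_eq_zero (K := F) Y X hX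
    rw [inner_sub_left] at h0
    have e1 := real_inner_comm X Y
    have e2 := real_inner_comm X Z
    have h0' : (inner ℝ Y X : ℝ) - inner ℝ Z X = 0 := by
      rw [Submodule.starProjection_apply] at h0
      exact h0
    linarith
  have hxpos : 0 < ‖X‖ := norm_pos_iff.2 hX0
  have hypos : 0 < ‖Y‖ := norm_pos_iff.2 hY0
  have ha : 0 < ‖Z‖ := lt_of_lt_of_le (mul_pos hc hypos) hca
  have hs : (inner ℝ X Z : ℝ) ^ 2 ≤ ‖X‖ ^ 2 * ‖Z‖ ^ 2 := by
    have h5 := abs_real_inner_le_norm X Z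
    nlinarith [sq_abs (inner ℝ X Z : ℝ), abs_nonneg (inner ℝ X Z : ℝ),
      mul_nonneg (norm_nonneg X) (norm_nonneg Z)]
  unfold psiVec
  rw [hinner]
  exact key_real7 c ‖Z‖ ‖Y‖ (inner ℝ X Z : ℝ) ‖X‖ hc hc1 hxpos ha hab hs

/-- **Lemma 3.1.** If every `X ∈ 𝓡` satisfies `‖p_F(X)‖ ≥ c‖X‖`, `A ⊆ F` with `dim A ≥ j`, and
`D ⊆ 𝓡 ∪ {0}` with `dim D ≥ j`, then `ψⱼ(A, D) ≥ √(c/2)·ψⱼ(A, p_F(D))`. -/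
theorem statement7 (n j : ℕ) (F A D : Submodule ℝ (EuclideanSpace ℝ (Fin n)))
    (hAF : A ≤ F) (hAj : j ≤ Module.finrank ℝ A)
    (R : Set (EuclideanSpace ℝ (Fin n))) (hRne : R.Nonempty)
    (hR0 : (0 : EuclideanSpace ℝ (Fin n)) ∉ R)
    (hRF : R ∩ (Fᗮ : Set (EuclideanSpace ℝ (Fin n))) = ∅)
    (c : ℝ) (hc : 0 < c)
    (hproj : ∀ X ∈ R, c * ‖X‖ ≤ ‖(Submodule.orthogonalProjection F X : EuclideanSpace ℝ (Fin n))‖)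
    (hDj : j ≤ Module.finrank ℝ D) (hDR : (D : Set (EuclideanSpace ℝ (Fin n))) ⊆ R ∪ {0}) :
    Real.sqrt (c / 2) *
        psiSub j A (D.map (F.subtype ∘ₗ (Submodule.orthogonalProjection F).toLinearMap)) ≤
      psiSub j A D := by
  classical
  -- c ≤ 1
  obtain ⟨X₀, hX₀⟩ := hRne
  have hX₀0 : X₀ ≠ 0 := fun h => hR0 (h ▸ hX₀)
  have hc1 : c ≤ 1 := by
    have h1 := hproj X₀ hX₀
    have hab : ‖(Submodule.orthogonalProjection F X₀ : EuclideanSpace ℝ (Fin n))‖ ≤ ‖X₀‖ := by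
      have h0 := (Submodule.orthogonalProjection F).le_opNorm X₀
      have h2 := Submodule.orthogonalProjectionOnto_norm_le F
      have h3 : ‖(Submodule.orthogonalProjection F X₀ : EuclideanSpace ℝ (Fin n))‖
          = ‖Submodule.orthogonalProjection F X₀‖ := by simp
      rw [h3]; nlinarith [norm_nonneg X₀]
    have hx : 0 < ‖X₀‖ := norm_pos_iff.2 hX₀0
    nlinarith
  have hpY : ∀ Y, (F.subtype ∘ₗ (Submodule.orthogonalProjection F).toLinearMap) Y
      = (Submodule.orthogonalProjection F Y : EuclideanSpace ℝ (Fin n)) := fun Y => rfl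
  unfold psiSub
  refine le_csInf ?_ ?_
  · -- nonemptiness of the feasible set for D
    obtain ⟨f, hf⟩ := exists_linearIndependent_of_le_finrank (R := ℝ) (M := ↥A) hAj
    have hfv : LinearIndependent ℝ (fun i => ((f i : EuclideanSpace ℝ (Fin n)))) :=
      hf.map' A.subtype A.ker_subtype
    refine ⟨1, zero_le_one,
      Submodule.span ℝ (Set.range fun i => ((f i : EuclideanSpace ℝ (Fin n)))), ?_, ?_, ?_⟩
    · rw [Submodule.span_le]; rintro _ ⟨i, rfl⟩; exact (f i).2
    · rw [finrank_span_eq_card hfv, Fintype.card_fin]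
    · intro X hX hX0
      have hD : D ≠ ⊥ := by
        intro h
        have hj0 : j = 0 := by
          have h4 := hDj
          rw [h, finrank_bot] at h4
          omega
        subst hj0
        rw [show (Set.range fun i : Fin 0 => ((f i : EuclideanSpace ℝ (Fin n)))) = ∅ from
          Set.range_eq_empty _, Submodule.span_empty, Submodule.mem_bot] at hX
        exact hX0 hX
      obtain ⟨Y, hYD, hY0⟩ := Submodule.exists_mem_ne_zero_of_ne_bot hD
      exact ⟨Y, hYD, hY0, psiVec_le_one7 X Y⟩
  · -- lower bound
    rintro l ⟨hl0, Aj, hAjA, hAjrk, hP⟩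
    have h2 : psiSub j A (D.map (F.subtype ∘ₗ (Submodule.orthogonalProjection F).toLinearMap))
        ≤ Real.sqrt (2 / c) * l := by
      unfold psiSub
      apply csInf_le ⟨0, fun m hm => hm.1⟩
      refine ⟨by positivity, Aj, hAjA, hAjrk, ?_⟩
      intro X hX hX0
      obtain ⟨Y, hYD, hY0, hψ⟩ := hP X hX hX0
      have hYR : Y ∈ R := by
        rcases hDR hYD with h | h
        · exact h
        · exact absurd h hY0
      have hca := hproj Y hYR
      refine ⟨(F.subtype ∘ₗ (Submodule.orthogonalProjection F).toLinearMap) Y,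
        Submodule.mem_map_of_mem hYD, ?_, ?_⟩
      · rw [hpY]
        intro h
        have hpos : (0:ℝ) < c * ‖Y‖ := mul_pos hc (norm_pos_iff.2 hY0)
        rw [h, norm_zero] at hca
        linarith
      · calc psiVec X ((F.subtype ∘ₗ (Submodule.orthogonalProjection F).toLinearMap) Y)
            ≤ Real.sqrt (2 / c) * psiVec X Y := by
              rw [hpY]
              exact psi_proj7 F c hc hc1 X Y (hAF (hAjA hX)) hX0 hY0 hca
          _ ≤ Real.sqrt (2 / c) * l := mul_le_mul_of_nonneg_left hψ (Real.sqrt_nonneg _)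
    calc Real.sqrt (c / 2) *
          psiSub j A (D.map (F.subtype ∘ₗ (Submodule.orthogonalProjection F).toLinearMap))
        ≤ Real.sqrt (c / 2) * (Real.sqrt (2 / c) * l) :=
          mul_le_mul_of_nonneg_left h2 (Real.sqrt_nonneg _)
      _ = Real.sqrt (c / 2) * Real.sqrt (2 / c) * l := by ring
      _ = l := by
          rw [← Real.sqrt_mul (by positivity), show c / 2 * (2 / c) = 1 by field_simp,
            Real.sqrt_one, one_mul]


end
end

section
/- Let F be a subspace of ℝⁿ, p_F the orthogonal projection of ℝⁿ onto F, and let 0 < c ≤ 1. Then for every nonzero X ∈ F and every nonzero Y ∈ ℝⁿ with ‖p_F(Y)‖ ≥ c‖Y‖ (so in particular p_F(Y) ≠ 0), one has ψ(X, p_F(Y)) ≤ √(2/c)·ψ(X, Y). -/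
open scoped BigOperators ENNReal

noncomputable section

/-- **Inequality (3).** For `0 < c ≤ 1`, nonzero `X ∈ F` and nonzero `Y` with
`‖p_F(Y)‖ ≥ c‖Y‖`, one has `ψ(X, p_F(Y)) ≤ √(2/c)·ψ(X, Y)`. -/
theorem statement10 (n : ℕ) (F : Submodule ℝ (EuclideanSpace ℝ (Fin n))) (c : ℝ)
    (hc0 : 0 < c) (hc1 : c ≤ 1) (X Y : EuclideanSpace ℝ (Fin n))
    (hXF : X ∈ F) (hX0 : X ≠ 0) (hY0 : Y ≠ 0)
    (hproj : c * ‖Y‖ ≤ ‖(Submodule.orthogonalProjection F Y : EuclideanSpace ℝ (Fin n))‖) :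
    psiVec X (Submodule.orthogonalProjection F Y : EuclideanSpace ℝ (Fin n)) ≤
      Real.sqrt (2 / c) * psiVec X Y := by
  set P : EuclideanSpace ℝ (Fin n) := (Submodule.orthogonalProjection F Y : EuclideanSpace ℝ (Fin n)) with hPdef
  have hY0' : (0:ℝ) < ‖Y‖ := norm_pos_iff.mpr hY0
  have hX0' : (0:ℝ) < ‖X‖ := norm_pos_iff.mpr hX0
  have hP0 : (0:ℝ) < ‖P‖ := lt_of_lt_of_le (by positivity) hproj
  have hPle : ‖P‖ ≤ ‖Y‖ := by
    calc ‖P‖ ≤ ‖Submodule.orthogonalProjection F‖ * ‖Y‖ := by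
          exact (Submodule.orthogonalProjection F).le_opNorm Y
      _ ≤ 1 * ‖Y‖ := by
          exact mul_le_mul_of_nonneg_right (Submodule.orthogonalProjection_norm_le F) hY0'.le
      _ = ‖Y‖ := one_mul _
  have hinner : (inner ℝ X Y : ℝ) = inner ℝ X P := by
    have h0 : (inner ℝ (Y - P) X : ℝ) = 0 :=
      Submodule.starProjection_inner_eq_zero Y X hXF
    have := real_inner_comm (Y - P) X
    rw [h0, inner_sub_right] at this
    linarith
  set t : ℝ := (inner ℝ X P : ℝ) with ht
  have hCS : t ^ 2 ≤ ‖X‖ ^ 2 * ‖P‖ ^ 2 := by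
    have h := abs_real_inner_le_norm X P
    nlinarith [abs_nonneg t, sq_abs t]
  have key : psiVec X P ≤ psiVec X Y := by
    unfold psiVec
    rw [hinner, ← ht]
    rw [div_le_div_iff₀ (by positivity) (by positivity)]
    have h1 : Real.sqrt (‖X‖ ^ 2 * ‖P‖ ^ 2 - t ^ 2) * (‖X‖ * ‖Y‖)
        = Real.sqrt ((‖X‖ ^ 2 * ‖P‖ ^ 2 - t ^ 2) * (‖X‖ * ‖Y‖) ^ 2) := by
      rw [Real.sqrt_mul (by nlinarith), Real.sqrt_sq (by positivity)]
    have h2 : Real.sqrt (‖X‖ ^ 2 * ‖Y‖ ^ 2 - t ^ 2) * (‖X‖ * ‖P‖)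
        = Real.sqrt ((‖X‖ ^ 2 * ‖Y‖ ^ 2 - t ^ 2) * (‖X‖ * ‖P‖) ^ 2) := by
      have hle : t ^ 2 ≤ ‖X‖ ^ 2 * ‖Y‖ ^ 2 := by nlinarith [hCS, mul_le_mul_of_nonneg_left (mul_le_mul hPle hPle hP0.le hY0'.le) (sq_nonneg ‖X‖)]
      rw [Real.sqrt_mul (by linarith), Real.sqrt_sq (by positivity)]
    rw [h1, h2]
    apply Real.sqrt_le_sqrt
    have hp2 : ‖P‖ ^ 2 ≤ ‖Y‖ ^ 2 := by nlinarith [hP0.le]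
    nlinarith [mul_le_mul_of_nonneg_left hp2 (mul_nonneg (sq_nonneg t) (sq_nonneg ‖X‖))]
  have hpsi0 : 0 ≤ psiVec X Y := by
    unfold psiVec; positivity
  have hone : (1:ℝ) ≤ Real.sqrt (2 / c) := by
    rw [show (1:ℝ) = Real.sqrt 1 by simp]
    apply Real.sqrt_le_sqrt
    rw [le_div_iff₀ hc0]; linarith
  calc psiVec X P ≤ psiVec X Y := key
    _ = 1 * psiVec X Y := (one_mul _).symm
    _ ≤ Real.sqrt (2 / c) * psiVec X Y := mul_le_mul_of_nonneg_right hone hpsi0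

end
end

section
/- Let ℓ ≥ 1 and let (ξ_{i,j})_{(i,j)∈{1,…,ℓ}²} be ℓ² real numbers that are algebraically independent over ℚ. Let M_ξ = (ξ_{i,j}) ∈ M_ℓ(ℝ) and let A ⊆ ℝ^{2ℓ} be the ℓ-dimensional subspace spanned by the columns of the block matrix (I_ℓ ; M_ξ) ∈ M_{2ℓ,ℓ}(ℝ) (identity block on top, M_ξ below). Then A ∩ B = {0} for every rational subspace B of ℝ^{2ℓ} of dimension ℓ. -/
open scoped BigOperators ENNReal

noncomputable section

open Matrix

lemma aux_linkey {V : Type*} [AddCommGroup V] [Module ℚ V] [FiniteDimensional ℚ V]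
    (p q : V →ₗ[ℚ] V) (h : LinearMap.ker p ⊓ LinearMap.ker q = ⊥) :
    ∃ x : V →ₗ[ℚ] V, Function.Injective (x ∘ₗ p - q) := by
  obtain ⟨C, hC⟩ := Submodule.exists_isCompl (LinearMap.ker p)
  set K := LinearMap.ker p with hK
  set W := K.map q with hW
  obtain ⟨U, hU⟩ := Submodule.exists_isCompl W
  have hqK : Function.Injective (q ∘ₗ K.subtype) := by
    rw [← LinearMap.ker_eq_bot, Submodule.eq_bot_iff]
    intro k hk
    have h1 : (k : V) ∈ K ⊓ LinearMap.ker q := ⟨k.2, by simpa using hk⟩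
    rw [h] at h1
    exact Subtype.ext (by simpa using h1)
  have hrW : LinearMap.range (q ∘ₗ K.subtype) = W := by
    rw [LinearMap.range_comp, Submodule.range_subtype]
  have hWK : Module.finrank ℚ W = Module.finrank ℚ K := by
    rw [← hrW]; exact LinearMap.finrank_range_of_inj hqK
  have hCU : Module.finrank ℚ C = Module.finrank ℚ U := by
    have h1 := Submodule.finrank_add_eq_of_isCompl hC
    have h2 := Submodule.finrank_add_eq_of_isCompl hU
    omega
  let j : C ≃ₗ[ℚ] U := LinearEquiv.ofFinrankEq _ _ hCU
  have hpC : LinearMap.ker (p ∘ₗ C.subtype) = ⊥ := by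
    rw [Submodule.eq_bot_iff]
    intro c hc
    have h1 : (c : V) ∈ K ⊓ C := ⟨LinearMap.mem_ker.mpr (by simpa using hc), c.2⟩
    rw [hC.inf_eq_bot] at h1
    exact Subtype.ext (by simpa using h1)
  obtain ⟨r, hr⟩ := LinearMap.exists_leftInverse_of_injective (p ∘ₗ C.subtype) hpC
  refine ⟨(q ∘ₗ C.subtype + U.subtype ∘ₗ (j : C →ₗ[ℚ] U)) ∘ₗ r, ?_⟩
  rw [← LinearMap.ker_eq_bot, Submodule.eq_bot_iff]
  intro v hv
  obtain ⟨k, c, hkK, hcC, hkc⟩ := Submodule.codisjoint_iff_exists_add_eq.mp hC.codisjoint v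
  have hpk : p k = 0 := hkK
  have hrc : r (p v) = ⟨c, hcC⟩ := by
    have h1 : p v = (p ∘ₗ C.subtype) ⟨c, hcC⟩ := by
      simp only [LinearMap.comp_apply, Submodule.subtype_apply]
      rw [← hkc, map_add, hpk, zero_add]
    rw [h1, ← LinearMap.comp_apply, hr, LinearMap.id_apply]
  set u : V := U.subtype ((j : C →ₗ[ℚ] U) ⟨c, hcC⟩) with hu
  have heq : q c + u = q v := by
    have h2 : (((q ∘ₗ C.subtype + U.subtype ∘ₗ (j : C →ₗ[ℚ] U)) ∘ₗ r) ∘ₗ p - q) v = 0 := hv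
    simp only [LinearMap.sub_apply, LinearMap.comp_apply, sub_eq_zero] at h2
    rw [hrc] at h2
    simpa [hu] using h2
  have hqv : q v = q k + q c := by rw [← hkc, map_add]
  have huk : u = q k := by
    have h3 : q c + u = q c + q k := by rw [heq, hqv]; abel
    exact add_left_cancel h3
  have hu0 : u = 0 := by
    have hmem : u ∈ W ⊓ U := ⟨huk ▸ Submodule.mem_map_of_mem hkK, Submodule.coe_mem _⟩
    rw [hU.inf_eq_bot] at hmem
    exact hmem
  have hc0 : c = 0 := by
    have : (j : C →ₗ[ℚ] U) ⟨c, hcC⟩ = 0 := by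
      exact Subtype.ext (by simpa [hu] using hu0)
    have h4 : (⟨c, hcC⟩ : C) = 0 := j.injective (by simpa using this)
    simpa using congrArg Subtype.val h4
  have hk0 : k = 0 := by
    have : k ∈ K ⊓ LinearMap.ker q := ⟨hkK, by simp [huk ▸ hu0]⟩
    rw [h] at this
    simpa using this
  rw [← hkc, hk0, hc0, add_zero]

lemma aux_key {n : ℕ} (P Q : Matrix (Fin n) (Fin n) ℚ)
    (h : ∀ e : Fin n → ℚ, P *ᵥ e = 0 → Q *ᵥ e = 0 → e = 0) :
    ∃ X : Matrix (Fin n) (Fin n) ℚ, (X * P - Q).det ≠ 0 := by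
  have hker : LinearMap.ker (Matrix.toLin' P) ⊓ LinearMap.ker (Matrix.toLin' Q) = ⊥ := by
    rw [Submodule.eq_bot_iff]
    intro v hv
    exact h v (by simpa [Matrix.toLin'_apply] using hv.1) (by simpa [Matrix.toLin'_apply] using hv.2)
  obtain ⟨x, hx⟩ := aux_linkey (Matrix.toLin' P) (Matrix.toLin' Q) hker
  refine ⟨LinearMap.toMatrix' x, ?_⟩
  intro hdet
  obtain ⟨v, hv0, hv⟩ := Matrix.exists_mulVec_eq_zero_iff.mpr hdet
  apply hv0
  have : (x ∘ₗ Matrix.toLin' P - Matrix.toLin' Q) v = 0 := by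
    have h1 : (LinearMap.toMatrix' x * P - Q) *ᵥ v
        = x (P *ᵥ v) - Q *ᵥ v := by
      rw [Matrix.sub_mulVec, ← Matrix.mulVec_mulVec]
      congr 1
      have := Matrix.toLin'_toMatrix' x
      calc LinearMap.toMatrix' x *ᵥ (P *ᵥ v)
          = Matrix.toLin' (LinearMap.toMatrix' x) (P *ᵥ v) := by rw [Matrix.toLin'_apply]
        _ = x (P *ᵥ v) := by rw [this]
    simp only [LinearMap.sub_apply, LinearMap.comp_apply, Matrix.toLin'_apply]
    rw [← h1, hv]
  have := hx (a₁ := v) (a₂ := 0) (by simpa using this)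
  simpa using this

lemma aux_eval {ℓ : ℕ} {Rng : Type*} [CommRing Rng] [Algebra ℚ Rng]
    (f : Fin ℓ × Fin ℓ → Rng) (P Q : Matrix (Fin ℓ) (Fin ℓ) ℚ) :
    MvPolynomial.aeval f
      ((Matrix.of (fun i j => MvPolynomial.X (R := ℚ) (i, j)) * P.map MvPolynomial.C
        - Q.map MvPolynomial.C).det)
    = ((Matrix.of fun i j => f (i, j)) * P.map (algebraMap ℚ Rng)
        - Q.map (algebraMap ℚ Rng)).det := by
  set φ : MvPolynomial (Fin ℓ × Fin ℓ) ℚ →+* Rng := (MvPolynomial.aeval f : _ →ₐ[ℚ] Rng).toRingHom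
  have h0 : (MvPolynomial.aeval f)
      ((Matrix.of (fun i j => MvPolynomial.X (R := ℚ) (i, j)) * P.map MvPolynomial.C
        - Q.map MvPolynomial.C).det)
      = φ ((Matrix.of (fun i j => MvPolynomial.X (R := ℚ) (i, j)) * P.map MvPolynomial.C
        - Q.map MvPolynomial.C).det) := rfl
  rw [h0, RingHom.map_det]
  congr 1
  rw [map_sub, _root_.map_mul]
  congr 1
  · congr 1
    · ext i j
      simp [φ, RingHom.mapMatrix_apply, Matrix.map_apply]
    · ext i j
      simp [φ, RingHom.mapMatrix_apply, Matrix.map_apply]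
  · ext i j
    simp [φ, RingHom.mapMatrix_apply, Matrix.map_apply]

/-- If the `ℓ²` reals `ξ_{i,j}` are algebraically independent over `ℚ`, the span `A` of the
columns of `(I_ℓ ; M_ξ)` meets every rational subspace of `ℝ^{2ℓ}` of dimension `ℓ` trivially. -/
theorem statement12 (ℓ : ℕ) (hℓ : 1 ≤ ℓ) (ξ : Fin ℓ → Fin ℓ → ℝ)
    (hξ : AlgebraicIndependent ℚ (fun p : Fin ℓ × Fin ℓ => ξ p.1 p.2))
    (Y : Fin ℓ → EuclideanSpace ℝ (Fin (2 * ℓ)))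
    (hY : ∀ j i, Y j i = if h : (i : ℕ) < ℓ then (if (⟨i, h⟩ : Fin ℓ) = j then 1 else 0)
      else ξ ⟨(i : ℕ) - ℓ, by have := i.isLt; omega⟩ j)
    (A : Submodule ℝ (EuclideanSpace ℝ (Fin (2 * ℓ))))
    (hA : A = Submodule.span ℝ (Set.range Y)) :
    Module.finrank ℝ A = ℓ ∧
      ∀ B : Submodule ℝ (EuclideanSpace ℝ (Fin (2 * ℓ))), IsRationalSubspace B →
        Module.finrank ℝ B = ℓ → A ⊓ B = ⊥ := by
  -- coordinate evaluation of sums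
  have hsum : ∀ (m : ℕ) (g : Fin ℓ → ℝ) (v : Fin ℓ → EuclideanSpace ℝ (Fin m)) (i : Fin m),
      (∑ j, g j • v j) i = ∑ j, g j * v j i := by
    intro m g v i
    rw [WithLp.ofLp_sum, Finset.sum_apply]
    rfl
  -- values of Y
  have hYtop : ∀ (j i : Fin ℓ), Y j ⟨(i : ℕ), by omega⟩ = if i = j then 1 else 0 := by
    intro j i
    rw [hY]
    rw [dif_pos (show ((⟨(i : ℕ), by omega⟩ : Fin (2 * ℓ)) : ℕ) < ℓ from i.isLt)]
  have hYbot : ∀ (j m : Fin ℓ), Y j ⟨ℓ + (m : ℕ), by omega⟩ = ξ m j := by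
    intro j m
    rw [hY]
    rw [dif_neg (by simp only [Fin.val_mk]; omega)]
    congr 1
    ext
    simp only [Fin.val_mk]
    omega
  -- linear independence of Y
  have hYli : LinearIndependent ℝ Y := by
    rw [Fintype.linearIndependent_iff]
    intro g hg i
    have h1 : (∑ j, g j • Y j) ⟨(i : ℕ), by omega⟩ = g i := by
      rw [hsum]
      simp only [hYtop]
      simp
    rw [hg] at h1
    simpa using h1.symm
  constructor
  · rw [hA, finrank_span_eq_card hYli, Fintype.card_fin]
  intro B hBrat hBrank
  obtain ⟨S, hSrat, hSspan⟩ := hBrat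
  obtain ⟨t, hts, htspan, htli⟩ := exists_linearIndependent ℝ S
  have htB : Submodule.span ℝ t = B := by rw [htspan, hSspan]
  have htfin : t.Finite := htli.setFinite
  haveI := htfin.fintype
  have hcard : Fintype.card t = ℓ := by
    have h1 := finrank_span_set_eq_card htli
    rw [htB, hBrank, Set.toFinset_card] at h1
    omega
  let eqv : Fin ℓ ≃ t := (Fintype.equivFinOfCardEq hcard).symm
  let b : Fin ℓ → EuclideanSpace ℝ (Fin (2 * ℓ)) := fun k => ((eqv k : t) : EuclideanSpace ℝ (Fin (2 * ℓ)))
  have hbli : LinearIndependent ℝ b := htli.comp eqv eqv.injective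
  have hbspan : Submodule.span ℝ (Set.range b) = B := by
    rw [← htB]
    congr 1
    show Set.range (Subtype.val ∘ eqv) = t
    rw [Set.range_comp, Equiv.range_eq_univ, Set.image_univ, Subtype.range_coe]
  have hbrat : ∀ k, IsRatVec (b k) := fun k => hSrat _ (hts (eqv k).2)
  -- rational coordinates
  let qc : Fin ℓ → Fin (2 * ℓ) → ℚ := fun k i => (hbrat k i).choose
  have hqc : ∀ k i, b k i = (qc k i : ℝ) := fun k i => (hbrat k i).choose_spec
  let P : Matrix (Fin ℓ) (Fin ℓ) ℚ := Matrix.of fun i k => qc k ⟨(i : ℕ), by omega⟩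
  let Qm : Matrix (Fin ℓ) (Fin ℓ) ℚ := Matrix.of fun m k => qc k ⟨ℓ + (m : ℕ), by omega⟩
  -- column independence over ℚ
  have hPQker : ∀ e : Fin ℓ → ℚ, P *ᵥ e = 0 → Qm *ᵥ e = 0 → e = 0 := by
    intro e h1 h2
    have hz : ∑ k, ((e k : ℝ)) • b k = 0 := by
      apply PiLp.ext
      intro i
      rw [hsum]
      have hcoord : ∑ k, (e k : ℝ) * b k i = ((∑ k, qc k i * e k : ℚ) : ℝ) := by
        push_cast
        congr 1
        ext k
        rw [hqc k i]
        ring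
      rw [hcoord]
      by_cases h : (i : ℕ) < ℓ
      · have h3 : (⟨((⟨(i : ℕ), h⟩ : Fin ℓ) : ℕ), by omega⟩ : Fin (2 * ℓ)) = i := by
          ext; simp
        have h4 := congrFun h1 ⟨(i : ℕ), h⟩
        simp only [Matrix.mulVec, dotProduct, P, Matrix.of_apply, Pi.zero_apply] at h4
        rw [h3] at h4
        rw [h4]
        simp
      · have hm : (i : ℕ) - ℓ < ℓ := by have := i.isLt; omega
        have h3 : (⟨ℓ + ((⟨(i : ℕ) - ℓ, hm⟩ : Fin ℓ) : ℕ), by omega⟩ : Fin (2 * ℓ)) = i := by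
          ext; simp; omega
        have h4 := congrFun h2 ⟨(i : ℕ) - ℓ, hm⟩
        simp only [Matrix.mulVec, dotProduct, Qm, Matrix.of_apply, Pi.zero_apply] at h4
        rw [h3] at h4
        rw [h4]
        simp
    funext k
    have := Fintype.linearIndependent_iff.mp hbli (fun k => (e k : ℝ)) hz k
    exact_mod_cast this
  -- A ⊓ B = ⊥
  rw [Submodule.eq_bot_iff]
  intro x hx
  by_contra hx0
  obtain ⟨c, hc⟩ := (Submodule.mem_span_range_iff_exists_fun ℝ).mp (by rw [← hA]; exact hx.1)
  obtain ⟨d, hd⟩ := (Submodule.mem_span_range_iff_exists_fun ℝ).mp (by rw [hbspan]; exact hx.2)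
  have hd0 : d ≠ 0 := by
    intro h
    apply hx0
    rw [← hd, h]
    simp
  -- top coordinates give c in terms of d
  have htopc : ∀ i : Fin ℓ, c i = ∑ k, (P i k : ℝ) * d k := by
    intro i
    have h1 : x ⟨(i : ℕ), by omega⟩ = c i := by
      rw [← hc, hsum]
      simp only [hYtop]
      simp
    have h2 : x ⟨(i : ℕ), by omega⟩ = ∑ k, (P i k : ℝ) * d k := by
      rw [← hd, hsum]
      congr 1
      ext k
      rw [hqc]
      simp only [P, Matrix.of_apply]
      ring
    rw [← h1, h2]
  have hbot : ∀ m : Fin ℓ, ∑ j, ξ m j * c j = ∑ k, (Qm m k : ℝ) * d k := by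
    intro m
    have h1 : x ⟨ℓ + (m : ℕ), by omega⟩ = ∑ j, ξ m j * c j := by
      rw [← hc, hsum]
      congr 1
      ext j
      rw [hYbot]
      ring
    have h2 : x ⟨ℓ + (m : ℕ), by omega⟩ = ∑ k, (Qm m k : ℝ) * d k := by
      rw [← hd, hsum]
      congr 1
      ext k
      rw [hqc]
      simp only [Qm, Matrix.of_apply]
      ring
    rw [← h1, h2]
  -- the real matrix is singular
  let Mξ : Matrix (Fin ℓ) (Fin ℓ) ℝ := Matrix.of fun i j => ξ i j
  have hRd : (Mξ * P.map (algebraMap ℚ ℝ) - Qm.map (algebraMap ℚ ℝ)) *ᵥ d = 0 := by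
    funext m
    simp only [Matrix.mulVec, dotProduct, Matrix.sub_apply, Matrix.mul_apply,
      Matrix.map_apply, sub_mul, Finset.sum_sub_distrib, Pi.zero_apply]
    have halg : ∀ a : ℚ, algebraMap ℚ ℝ a = (a : ℝ) := fun a => by
      exact eq_ratCast (algebraMap ℚ ℝ) a
    have h1 : ∑ k, (∑ j, Mξ m j * algebraMap ℚ ℝ (P j k)) * d k = ∑ j, ξ m j * c j := by
      calc ∑ k, (∑ j, Mξ m j * algebraMap ℚ ℝ (P j k)) * d k
          = ∑ k, ∑ j, ξ m j * ((P j k : ℝ) * d k) := by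
            simp only [Finset.sum_mul, Mξ, Matrix.of_apply, halg, mul_assoc]
        _ = ∑ j, ∑ k, ξ m j * ((P j k : ℝ) * d k) := Finset.sum_comm
        _ = ∑ j, ξ m j * c j := by
            congr 1; ext j; rw [← Finset.mul_sum, ← htopc]
    rw [h1, hbot m]
    simp only [halg]
    simp
  have hdet0 : (Mξ * P.map (algebraMap ℚ ℝ) - Qm.map (algebraMap ℚ ℝ)).det = 0 :=
    Matrix.exists_mulVec_eq_zero_iff.mp ⟨d, hd0, hRd⟩
  -- polynomial is zero by algebraic independence
  set Fp : MvPolynomial (Fin ℓ × Fin ℓ) ℚ :=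
    (Matrix.of (fun i j => MvPolynomial.X (R := ℚ) (i, j)) * P.map MvPolynomial.C
      - Qm.map MvPolynomial.C).det with hFp
  have hFeval : MvPolynomial.aeval (fun p : Fin ℓ × Fin ℓ => ξ p.1 p.2) Fp = 0 := by
    rw [hFp, aux_eval]
    convert hdet0 using 3
  have hFp0 : Fp = 0 := by
    have hinj := algebraicIndependent_iff_injective_aeval.mp hξ
    apply hinj
    rw [hFeval, map_zero]
  -- contradiction with aux_key
  obtain ⟨X₀, hX₀⟩ := aux_key P Qm hPQker
  apply hX₀
  have h6 := aux_eval (Rng := ℚ) (fun p : Fin ℓ × Fin ℓ => X₀ p.1 p.2) P Qm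
  rw [← hFp, hFp0, map_zero] at h6
  have h7 : ((Matrix.of fun i j => (fun p : Fin ℓ × Fin ℓ => X₀ p.1 p.2) (i, j)) *
      P.map (algebraMap ℚ ℚ) - Qm.map (algebraMap ℚ ℚ)) = X₀ * P - Qm := by
    have hid : ∀ (M : Matrix (Fin ℓ) (Fin ℓ) ℚ), M.map (algebraMap ℚ ℚ) = M := by
      intro M; ext i j; simp [Matrix.map_apply]
    rw [hid, hid]
    rfl
  rw [← h7, ← h6]


end
end

section
/- Let n ≥ 2 and let F be a rational subspace of ℝⁿ of dimension k with 1 ≤ k ≤ n−1. Then there exist vectors g_1,…,g_n ∈ ℚⁿ that form a basis of ℝⁿ and such that for every subset I ⊆ {1,…,n} with |I| = n−k, one has Span{g_i : i ∈ I} ∩ F = {0}. -/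
open scoped BigOperators ENNReal

set_option maxHeartbeats 1000000

noncomputable section

section Aux

open Submodule Set

variable {n : ℕ}

/-- The canonical ℚ-linear inclusion of ℚⁿ into ℝⁿ. -/
def ratIncl (n : ℕ) : (Fin n → ℚ) →ₗ[ℚ] EuclideanSpace ℝ (Fin n) where
  toFun q := WithLp.toLp 2 (fun i => (q i : ℝ))
  map_add' a b := by ext i; exact Rat.cast_add (a i) (b i)
  map_smul' c a := by
    ext i
    show ((c * a i : ℚ) : ℝ) = c • ((a i : ℚ) : ℝ)
    rw [Rat.smul_def]; push_cast; ring

lemma exists_rat_not_mem (s : Finset (Submodule ℝ (EuclideanSpace ℝ (Fin n))))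
    (hs : ∀ W ∈ s, W ≠ ⊤) :
    ∃ x : EuclideanSpace ℝ (Fin n), IsRatVec x ∧ ∀ W ∈ s, x ∉ W := by
  classical
  set t : Finset (Subspace ℚ (Fin n → ℚ)) :=
    s.image (fun W => (W.restrictScalars ℚ).comap (ratIncl n)) with ht
  have htop : (⊤ : Subspace ℚ (Fin n → ℚ)) ∉ t := by
    intro h
    rw [ht, Finset.mem_image] at h
    obtain ⟨W, hWs, hW⟩ := h
    apply hs W hWs
    rw [eq_top_iff]
    have hb := (EuclideanSpace.basisFun (Fin n) ℝ).toBasis.span_eq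
    rw [← hb, Submodule.span_le]
    rintro v ⟨i, rfl⟩
    have : (Pi.single i 1 : Fin n → ℚ) ∈ (W.restrictScalars ℚ).comap (ratIncl n) := by
      rw [hW]; trivial
    have h2 : ratIncl n (Pi.single i 1) ∈ W := this
    convert (show _ ∈ (W : Set (EuclideanSpace ℝ (Fin n))) from h2) using 2
    ext j
    rw [OrthonormalBasis.coe_toBasis, EuclideanSpace.basisFun_apply,
      EuclideanSpace.single_apply]
    show _ = ((Pi.single i 1 : Fin n → ℚ) j : ℝ)
    rw [Pi.single_apply]
    rcases eq_or_ne j i with rfl | hji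
    · simp
    · simp [hji]
  have := Subspace.biUnion_ne_univ_of_top_notMem htop
  rw [Ne, Set.eq_univ_iff_forall] at this
  push_neg at this
  obtain ⟨q, hq⟩ := this
  simp only [Set.mem_iUnion, SetLike.mem_coe, not_exists] at hq
  refine ⟨ratIncl n q, fun i => ⟨q i, rfl⟩, fun W hWs hmem => ?_⟩
  exact hq ((W.restrictScalars ℚ).comap (ratIncl n))
    (ht ▸ Finset.mem_image_of_mem _ hWs) hmem

lemma disjoint_sup_span_singleton {E : Type*} [AddCommGroup E] [Module ℝ E]
    {W F : Submodule ℝ E} {x : E} (hWF : Disjoint W F) (hx : x ∉ W ⊔ F) :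
    Disjoint (W ⊔ Submodule.span ℝ {x}) F := by
  rw [disjoint_def]
  intro v hv hvF
  obtain ⟨w, hw, y, hy, rfl⟩ := Submodule.mem_sup.mp hv
  obtain ⟨c, rfl⟩ := Submodule.mem_span_singleton.mp hy
  rcases eq_or_ne c 0 with rfl | hc
  · rw [zero_smul, add_zero] at hvF ⊢
    exact Submodule.disjoint_def.mp hWF w hw hvF
  · exfalso
    apply hx
    have hxeq : x = c⁻¹ • ((w + c • x) - w) := by
      rw [add_sub_cancel_left, smul_smul, inv_mul_cancel₀ hc, one_smul]
    rw [hxeq]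
    exact Submodule.smul_mem _ _ (Submodule.sub_mem _ (Submodule.mem_sup_right hvF)
      (Submodule.mem_sup_left hw))

lemma key_induction (k : ℕ) (F : Submodule ℝ (EuclideanSpace ℝ (Fin n)))
    (hFfin : Module.finrank ℝ F ≤ k) :
    ∀ m, m ≤ n → ∃ g : Fin m → EuclideanSpace ℝ (Fin n),
      (∀ i, IsRatVec (g i)) ∧ LinearIndependent ℝ g ∧
      ∀ J : Finset (Fin m), J.card + k ≤ n →
        Disjoint (Submodule.span ℝ (g '' (J : Set (Fin m)))) F := by
  classical
  intro m
  induction m with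
  | zero =>
    intro _
    refine ⟨fun i => 0, fun i => i.elim0, linearIndependent_empty_type, fun J _ => ?_⟩
    have : ((J : Set (Fin 0)) : Set (Fin 0)) = ∅ := Set.eq_empty_of_isEmpty _
    rw [this, Set.image_empty, Submodule.span_empty]
    exact disjoint_bot_left
  | succ m ih =>
    intro hm
    obtain ⟨g, hrat, hli, hdisj⟩ := ih (Nat.le_of_succ_le hm)
    -- the finite family of proper subspaces to avoid
    set f : Finset (Fin m) → Submodule ℝ (EuclideanSpace ℝ (Fin n)) :=
      fun J => if J.card + k + 1 ≤ n then Submodule.span ℝ (g '' (J : Set (Fin m))) ⊔ F else ⊥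
      with hfdef
    set s : Finset (Submodule ℝ (EuclideanSpace ℝ (Fin n))) :=
      insert (Submodule.span ℝ (Set.range g)) (Finset.image f Finset.univ) with hsdef
    have hspanle : ∀ J : Finset (Fin m),
        Module.finrank ℝ (Submodule.span ℝ (g '' (J : Set (Fin m)))) ≤ J.card := by
      intro J
      have h0 : g '' (J : Set (Fin m))
          = ((J.image g : Finset (EuclideanSpace ℝ (Fin n))) : Set (EuclideanSpace ℝ (Fin n))) :=
        (Finset.coe_image).symm
      rw [h0]
      exact le_trans (finrank_span_finset_le_card (J.image g)) Finset.card_image_le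
    have hproper : ∀ W ∈ s, W ≠ ⊤ := by
      intro W hW
      rw [hsdef, Finset.mem_insert] at hW
      have hrank : Module.finrank ℝ W < n := by
        rcases hW with rfl | hW
        · have h0 : Set.range g = g '' ((Finset.univ : Finset (Fin m)) : Set (Fin m)) := by
            rw [Finset.coe_univ, Set.image_univ]
          rw [h0]
          calc Module.finrank ℝ
                (Submodule.span ℝ (g '' ((Finset.univ : Finset (Fin m)) : Set (Fin m))))
              ≤ (Finset.univ : Finset (Fin m)).card := hspanle _
            _ = m := by simp
            _ < n := hm
        · rw [Finset.mem_image] at hW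
          obtain ⟨J, -, rfl⟩ := hW
          by_cases hJ : J.card + k + 1 ≤ n
          · have hfJ : f J = Submodule.span ℝ (g '' (J : Set (Fin m))) ⊔ F := if_pos hJ
            rw [hfJ]
            calc Module.finrank ℝ ↥(Submodule.span ℝ (g '' (J : Set (Fin m))) ⊔ F)
                ≤ Module.finrank ℝ (Submodule.span ℝ (g '' (J : Set (Fin m))))
                    + Module.finrank ℝ F := Submodule.finrank_add_le_finrank_add_finrank _ _
              _ ≤ J.card + k := Nat.add_le_add (hspanle J) hFfin
              _ < n := by omega
          · have hfJ : f J = ⊥ := if_neg hJ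
            rw [hfJ, finrank_bot]
            omega
      intro htop
      rw [htop, finrank_top, finrank_euclideanSpace_fin] at hrank
      exact lt_irrefl n hrank
    obtain ⟨x, hxrat, hxnot⟩ := exists_rat_not_mem s hproper
    have hxspan : x ∉ Submodule.span ℝ (Set.range g) :=
      hxnot _ (Finset.mem_insert_self _ _)
    refine ⟨Fin.snoc g x, ?_, ?_, ?_⟩
    · intro i
      refine Fin.lastCases ?_ ?_ i
      · rw [Fin.snoc_last]; exact hxrat
      · intro j; rw [Fin.snoc_castSucc]; exact hrat j
    · exact linearIndependent_fin_snoc.mpr ⟨hli, hxspan⟩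
    · intro J' hJ'
      set J : Finset (Fin m) := Finset.univ.filter (fun i => i.castSucc ∈ J') with hJdef
      have hcard : J.card = (J'.erase (Fin.last m)).card := by
        refine Finset.card_bij (fun i _ => i.castSucc) ?_ ?_ ?_
        · intro i hi
          rw [hJdef, Finset.mem_filter] at hi
          exact Finset.mem_erase.mpr ⟨Fin.castSucc_lt_last i |>.ne, hi.2⟩
        · intro a _ b _ h
          exact Fin.castSucc_injective m h
        · intro j hj
          rw [Finset.mem_erase] at hj
          rcases Fin.eq_castSucc_or_eq_last j with ⟨i, rfl⟩ | rfl
          · exact ⟨i, Finset.mem_filter.mpr ⟨Finset.mem_univ i, hj.2⟩, rfl⟩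
          · exact absurd rfl hj.1
      by_cases hlast : Fin.last m ∈ J'
      · -- J' contains the last index
        have himg : (Fin.snoc g x : Fin (m+1) → _) '' (J' : Set (Fin (m+1)))
            = g '' (J : Set (Fin m)) ∪ {x} := by
          ext y
          simp only [Set.mem_image, Finset.mem_coe, Set.mem_union, Set.mem_singleton_iff]
          constructor
          · rintro ⟨i, hi, rfl⟩
            rcases Fin.eq_castSucc_or_eq_last i with ⟨j, rfl⟩ | rfl
            · exact Or.inl ⟨j, by rw [hJdef]; exact Finset.mem_filter.mpr ⟨Finset.mem_univ j, hi⟩,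
                (by simp)⟩
            · exact Or.inr (by simp)
          · rintro (⟨j, hj, rfl⟩ | rfl)
            · rw [hJdef, Finset.mem_filter] at hj
              exact ⟨j.castSucc, hj.2, by simp⟩
            · exact ⟨Fin.last m, hlast, by simp⟩
        rw [himg, Submodule.span_union]
        have hJcard : J.card + 1 + k ≤ n := by
          rw [hcard]
          have := Finset.card_erase_add_one hlast
          omega
        refine disjoint_sup_span_singleton (hdisj J (by omega)) ?_
        apply hxnot
        have hfJ : f J = Submodule.span ℝ (g '' (J : Set (Fin m))) ⊔ F := if_pos (by omega)
        rw [hsdef, ← hfJ]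
        exact Finset.mem_insert_of_mem (Finset.mem_image_of_mem f (Finset.mem_univ J))
      · -- J' does not contain the last index
        have himg : (Fin.snoc g x : Fin (m+1) → _) '' (J' : Set (Fin (m+1)))
            = g '' (J : Set (Fin m)) := by
          ext y
          simp only [Set.mem_image, Finset.mem_coe]
          constructor
          · rintro ⟨i, hi, rfl⟩
            rcases Fin.eq_castSucc_or_eq_last i with ⟨j, rfl⟩ | rfl
            · exact ⟨j, by rw [hJdef]; exact Finset.mem_filter.mpr ⟨Finset.mem_univ j, hi⟩,
                by simp⟩
            · exact absurd hi hlast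
          · rintro ⟨j, hj, rfl⟩
            rw [hJdef, Finset.mem_filter] at hj
            exact ⟨j.castSucc, hj.2, by simp⟩
        rw [himg]
        refine hdisj J ?_
        rw [hcard, Finset.erase_eq_of_notMem hlast]
        exact hJ'

end Aux

/-- There is a rational basis `g₁, …, gₙ` of `ℝⁿ` such that every `n−k` of its vectors span a
subspace meeting the given rational subspace `F` (of dimension `k`) trivially. -/
theorem statement14 (n k : ℕ) (hn : 2 ≤ n) (hk1 : 1 ≤ k) (hk : k ≤ n - 1)
    (F : Submodule ℝ (EuclideanSpace ℝ (Fin n))) (hF : IsRationalSubspace F)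
    (hFk : Module.finrank ℝ F = k) :
    ∃ g : Fin n → EuclideanSpace ℝ (Fin n), (∀ i, IsRatVec (g i)) ∧
      LinearIndependent ℝ g ∧ Submodule.span ℝ (Set.range g) = ⊤ ∧
      ∀ I : Finset (Fin n), I.card = n - k →
        Submodule.span ℝ (g '' (I : Set (Fin n))) ⊓ F = ⊥ := by
  obtain ⟨g, hrat, hli, hdisj⟩ := key_induction k F (le_of_eq hFk) n le_rfl
  haveI : Nonempty (Fin n) := ⟨⟨0, by omega⟩⟩
  refine ⟨g, hrat, hli, ?_, ?_⟩
  · exact hli.span_eq_top_of_card_eq_finrank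
      (by rw [Fintype.card_fin, finrank_euclideanSpace_fin])
  · intro I hI
    have hkn : k ≤ n := le_trans hk (Nat.sub_le n 1)
    have : I.card + k ≤ n := by omega
    exact disjoint_iff.mp (hdisj I this)

end
end

section
/- Let ℓ ≥ 1 and let F_1,…,F_ℓ be lines (1-dimensional subspaces) of ℝ^{2ℓ} spanning an ℓ-dimensional subspace F = F_1 ⊕ ⋯ ⊕ F_ℓ. Then there exists a constant c_F > 0, depending only on F_1,…,F_ℓ, such that for all lines B_1,…,B_ℓ of ℝ^{2ℓ} spanning an ℓ-dimensional subspace B = B_1 ⊕ ⋯ ⊕ B_ℓ, one has ψ_ℓ(F, B) ≤ c_F · Σ_{i=1}^{ℓ} ψ_1(F_i, B_i). -/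
open scoped BigOperators ENNReal

noncomputable section

namespace St18

variable {n : ℕ}

lemma psiVec_nonneg (X Y : EuclideanSpace ℝ (Fin n)) : 0 ≤ psiVec X Y :=
  div_nonneg (Real.sqrt_nonneg _) (by positivity)

lemma psiVec_le_one (X Y : EuclideanSpace ℝ (Fin n)) : psiVec X Y ≤ 1 := by
  unfold psiVec
  apply div_le_one_of_le₀
  · calc Real.sqrt (‖X‖ ^ 2 * ‖Y‖ ^ 2 - (inner ℝ X Y : ℝ) ^ 2)
        ≤ Real.sqrt (‖X‖ ^ 2 * ‖Y‖ ^ 2) :=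
          Real.sqrt_le_sqrt (by nlinarith [sq_nonneg (inner ℝ X Y : ℝ)])
      _ = ‖X‖ * ‖Y‖ := by
          rw [← mul_pow, Real.sqrt_sq (by positivity)]
  · positivity

lemma psiVec_smul_right (X Y : EuclideanSpace ℝ (Fin n)) (t : ℝ) (ht : t ≠ 0) :
    psiVec X (t • Y) = psiVec X Y := by
  unfold psiVec
  rw [norm_smul, real_inner_smul_right]
  have h1 : ‖X‖ ^ 2 * (‖t‖ * ‖Y‖) ^ 2 - (t * (inner ℝ X Y : ℝ)) ^ 2
      = t ^ 2 * (‖X‖ ^ 2 * ‖Y‖ ^ 2 - (inner ℝ X Y : ℝ) ^ 2) := by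
    rw [Real.norm_eq_abs, mul_pow, mul_pow, sq_abs]; ring
  rw [h1, Real.sqrt_mul (sq_nonneg t), Real.sqrt_sq_eq_abs, Real.norm_eq_abs]
  have habs : |t| ≠ 0 := abs_ne_zero.mpr ht
  rw [show ‖X‖ * (|t| * ‖Y‖) = |t| * (‖X‖ * ‖Y‖) by ring, mul_div_mul_left _ _ habs]

lemma psiVec_le_div (X Y : EuclideanSpace ℝ (Fin n)) (hX : X ≠ 0) (hY : Y ≠ 0) :
    psiVec X Y ≤ ‖X - Y‖ / ‖X‖ := by
  have hXn : (0:ℝ) < ‖X‖ := norm_pos_iff.mpr hX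
  have hYn : (0:ℝ) < ‖Y‖ := norm_pos_iff.mpr hY
  have hns : ‖X - Y‖ ^ 2 = ‖X‖ ^ 2 - 2 * (inner ℝ X Y : ℝ) + ‖Y‖ ^ 2 := norm_sub_sq_real X Y
  have key : ‖X‖ ^ 2 * ‖Y‖ ^ 2 - (inner ℝ X Y : ℝ) ^ 2 ≤ ‖Y‖ ^ 2 * ‖X - Y‖ ^ 2 := by
    nlinarith [sq_nonneg (‖Y‖ ^ 2 - (inner ℝ X Y : ℝ))]
  unfold psiVec
  rw [div_le_div_iff₀ (by positivity) hXn]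
  calc Real.sqrt (‖X‖ ^ 2 * ‖Y‖ ^ 2 - (inner ℝ X Y : ℝ) ^ 2) * ‖X‖
      ≤ Real.sqrt (‖Y‖ ^ 2 * ‖X - Y‖ ^ 2) * ‖X‖ := by
        have := Real.sqrt_le_sqrt key
        nlinarith [norm_nonneg X, Real.sqrt_nonneg (‖X‖ ^ 2 * ‖Y‖ ^ 2 - (inner ℝ X Y : ℝ) ^ 2)]
    _ = (‖Y‖ * ‖X - Y‖) * ‖X‖ := by rw [← mul_pow, Real.sqrt_sq (by positivity)]
    _ = ‖X - Y‖ * (‖X‖ * ‖Y‖) := by ring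

lemma norm_sub_le_sqrt_two_psiVec (f b : EuclideanSpace ℝ (Fin n)) (hf : ‖f‖ = 1)
    (hb : ‖b‖ = 1) (hip : 0 ≤ (inner ℝ f b : ℝ)) :
    ‖f - b‖ ≤ Real.sqrt 2 * psiVec f b := by
  have hcs : (inner ℝ f b : ℝ) ≤ 1 := by
    have := real_inner_le_norm f b
    rw [hf, hb] at this; simpa using this
  have hA : (0:ℝ) ≤ 1 - (inner ℝ f b : ℝ) ^ 2 := by nlinarith
  have hpsi : psiVec f b = Real.sqrt (1 - (inner ℝ f b : ℝ) ^ 2) := by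
    unfold psiVec; rw [hf, hb]; norm_num
  have hsq : ‖f - b‖ ^ 2 = 2 - 2 * (inner ℝ f b : ℝ) := by
    rw [norm_sub_sq_real, hf, hb]; ring
  have hrhs : (Real.sqrt 2 * psiVec f b) ^ 2 = 2 * (1 - (inner ℝ f b : ℝ) ^ 2) := by
    rw [hpsi, mul_pow, Real.sq_sqrt (by norm_num : (0:ℝ) ≤ 2), Real.sq_sqrt hA]
  have h1 : ‖f - b‖ ^ 2 ≤ (Real.sqrt 2 * psiVec f b) ^ 2 := by
    rw [hsq, hrhs]; nlinarith
  have h2 : 0 ≤ Real.sqrt 2 * psiVec f b := by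
    have := psiVec_nonneg f b; positivity
  nlinarith [norm_nonneg (f - b)]

lemma psiSub_bddBelow {j : ℕ} {A B : Submodule ℝ (EuclideanSpace ℝ (Fin n))} :
    BddBelow {l : ℝ | 0 ≤ l ∧ ∃ Aj : Submodule ℝ (EuclideanSpace ℝ (Fin n)), Aj ≤ A ∧
      Module.finrank ℝ Aj = j ∧ ∀ X ∈ Aj, X ≠ 0 → ∃ Y ∈ B, Y ≠ 0 ∧ psiVec X Y ≤ l} :=
  ⟨0, fun _ hx => hx.1⟩

lemma psiVec_le_psiSub_one (FF BB : Submodule ℝ (EuclideanSpace ℝ (Fin n)))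
    (hFF : Module.finrank ℝ FF = 1) (hBB : Module.finrank ℝ BB = 1)
    (f : EuclideanSpace ℝ (Fin n)) (hfF : f ∈ FF) (hf0 : f ≠ 0)
    (b : EuclideanSpace ℝ (Fin n)) (hbB : b ∈ BB) (hb0 : b ≠ 0) :
    psiVec f b ≤ psiSub 1 FF BB := by
  have hBBspan : BB = (ℝ ∙ b) := by
    refine (Submodule.eq_of_le_of_finrank_le ((Submodule.span_singleton_le_iff_mem _ _).mpr hbB)
      ?_).symm
    rw [finrank_span_singleton hb0, hBB]
  apply le_csInf
  · exact ⟨1, le_of_lt one_pos, FF, le_refl _, hFF,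
      fun X _ _ => ⟨b, hbB, hb0, psiVec_le_one X b⟩⟩
  · rintro l ⟨hl0, Aj, hAjle, hAjrank, h⟩
    have hAjF : Aj = FF := Submodule.eq_of_le_of_finrank_le hAjle (by rw [hAjrank, hFF])
    obtain ⟨Y, hYB, hY0, hYle⟩ := h f (hAjF ▸ hfF) hf0
    rw [hBBspan, Submodule.mem_span_singleton] at hYB
    obtain ⟨t, rfl⟩ := hYB
    have ht : t ≠ 0 := fun h => hY0 (by simp [h])
    rwa [psiVec_smul_right f b t ht] at hYle

end St18

set_option maxHeartbeats 1600000 in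
/-- **Lemma 4.1.** Given lines `F₁,…,F_ℓ` of `ℝ^{2ℓ}` spanning an `ℓ`-dimensional subspace `F`,
there is `c_F > 0` such that for all lines `B₁,…,B_ℓ` spanning an `ℓ`-dimensional subspace `B`,
`ψ_ℓ(F, B) ≤ c_F · Σᵢ ψ₁(Fᵢ, Bᵢ)`. -/
theorem statement18 (ℓ : ℕ) (hℓ : 1 ≤ ℓ)
    (F : Fin ℓ → Submodule ℝ (EuclideanSpace ℝ (Fin (2 * ℓ))))
    (hF1 : ∀ i, Module.finrank ℝ (F i) = 1)
    (hFrank : Module.finrank ℝ ↥(⨆ i, F i) = ℓ) :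
    ∃ c > 0, ∀ B : Fin ℓ → Submodule ℝ (EuclideanSpace ℝ (Fin (2 * ℓ))),
      (∀ i, Module.finrank ℝ (B i) = 1) → Module.finrank ℝ ↥(⨆ i, B i) = ℓ →
      psiSub ℓ (⨆ i, F i) (⨆ i, B i) ≤ c * ∑ i, psiSub 1 (F i) (B i) := by
  classical
  -- choose unit vectors f i ∈ F i
  have hexF : ∀ i, ∃ x : EuclideanSpace ℝ (Fin (2 * ℓ)), x ∈ F i ∧ ‖x‖ = 1 := by
    intro i
    have hne : F i ≠ ⊥ := by
      intro h
      have h1 := hF1 i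
      rw [h] at h1
      simp at h1
    obtain ⟨x, hxF, hx0⟩ := (Submodule.ne_bot_iff _).mp hne
    exact ⟨‖x‖⁻¹ • x, Submodule.smul_mem _ _ hxF, norm_smul_inv_norm hx0⟩
  choose f hfF hf1 using hexF
  have hf0 : ∀ i, f i ≠ 0 := fun i h => by
    have := hf1 i; rw [h, norm_zero] at this; norm_num at this
  -- F i is spanned by f i
  have hFspan : ∀ i, F i = (ℝ ∙ f i) := by
    intro i
    refine (Submodule.eq_of_le_of_finrank_le
      ((Submodule.span_singleton_le_iff_mem _ _).mpr (hfF i)) ?_).symm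
    rw [finrank_span_singleton (hf0 i), hF1 i]
  have hFsup : (⨆ i, F i) = Submodule.span ℝ (Set.range f) := by
    rw [Submodule.span_range_eq_iSup]
    exact iSup_congr hFspan
  have hlif : LinearIndependent ℝ f := by
    rw [linearIndependent_iff_card_eq_finrank_span]
    rw [Set.finrank, ← hFsup, hFrank, Fintype.card_fin]
  -- basis of Fsup
  have hfmem : ∀ i, f i ∈ ⨆ i, F i := fun i => Submodule.mem_iSup_of_mem i (hfF i)
  set g : Fin ℓ → ↥(⨆ i, F i) := fun i => ⟨f i, hfmem i⟩ with hgdef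
  have hg : LinearIndependent ℝ g := by
    apply LinearIndependent.of_comp (⨆ i, F i).subtype
    convert hlif
    rfl
  have hgspan : ⊤ ≤ Submodule.span ℝ (Set.range g) := by
    rintro ⟨x, hx⟩ -
    have hx' : x ∈ Submodule.span ℝ (Set.range f) := hFsup ▸ hx
    obtain ⟨c, hc⟩ := (Submodule.mem_span_range_iff_exists_fun ℝ).mp hx'
    have hxe : (⟨x, hx⟩ : ↥(⨆ i, F i)) = ∑ i, c i • g i := by
      apply Subtype.ext
      push_cast [hgdef]
      exact hc.symm
    rw [hxe]
    exact Submodule.sum_mem _ fun i _ =>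
      Submodule.smul_mem _ _ (Submodule.subset_span ⟨i, rfl⟩)
  set bF : Module.Basis (Fin ℓ) ℝ ↥(⨆ i, F i) := Module.Basis.mk hg hgspan with hbFdef
  set T : Fin ℓ → (↥(⨆ i, F i) →L[ℝ] ℝ) :=
    fun i => LinearMap.toContinuousLinearMap (bF.coord i) with hTdef
  set C : ℝ := (∑ i, ‖T i‖) + 1 with hCdef
  have hC : 0 < C := by
    have : (0:ℝ) ≤ ∑ i, ‖T i‖ := Finset.sum_nonneg fun i _ => (T i).opNorm_nonneg
    linarith
  have hcoord : ∀ (x : ↥(⨆ i, F i)) (i : Fin ℓ), |bF.repr x i| ≤ C * ‖x‖ := by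
    intro x i
    have h1 : |bF.repr x i| = ‖T i x‖ := by
      simp [hTdef, Module.Basis.coord_apply]
    have h2 : ‖T i x‖ ≤ ‖T i‖ * ‖x‖ := (T i).le_opNorm x
    have h3 : ‖T i‖ ≤ C := by
      have := Finset.single_le_sum (f := fun j => ‖T j‖)
        (fun j _ => (T j).opNorm_nonneg) (Finset.mem_univ i)
      rw [hCdef]; linarith
    calc |bF.repr x i| = ‖T i x‖ := h1
      _ ≤ ‖T i‖ * ‖x‖ := h2
      _ ≤ C * ‖x‖ := by gcongr
  refine ⟨Real.sqrt 2 * C, by positivity, ?_⟩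
  intro B hB1 hBrank
  -- choose unit vectors b i ∈ B i with nonnegative inner product with f i
  have hexB : ∀ i, ∃ x : EuclideanSpace ℝ (Fin (2 * ℓ)),
      x ∈ B i ∧ ‖x‖ = 1 ∧ 0 ≤ (inner ℝ (f i) x : ℝ) := by
    intro i
    have hne : B i ≠ ⊥ := by
      intro h
      have h1 := hB1 i
      rw [h] at h1
      simp at h1
    obtain ⟨y, hyB, hy0⟩ := (Submodule.ne_bot_iff _).mp hne
    set u : EuclideanSpace ℝ (Fin (2 * ℓ)) := ‖y‖⁻¹ • y with hu
    have humem : u ∈ B i := Submodule.smul_mem _ _ hyB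
    have hunorm : ‖u‖ = 1 := norm_smul_inv_norm hy0
    by_cases h : 0 ≤ (inner ℝ (f i) u : ℝ)
    · exact ⟨u, humem, hunorm, h⟩
    · refine ⟨-u, Submodule.neg_mem _ humem, by rw [norm_neg]; exact hunorm, ?_⟩
      rw [inner_neg_right]
      linarith
  choose b hbB hb1 hbip using hexB
  have hb0 : ∀ i, b i ≠ 0 := fun i h => by
    have := hb1 i; rw [h, norm_zero] at this; norm_num at this
  have hBspan : ∀ i, B i = (ℝ ∙ b i) := by
    intro i
    refine (Submodule.eq_of_le_of_finrank_le
      ((Submodule.span_singleton_le_iff_mem _ _).mpr (hbB i)) ?_).symm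
    rw [finrank_span_singleton (hb0 i), hB1 i]
  have hBsup : (⨆ i, B i) = Submodule.span ℝ (Set.range b) := by
    rw [Submodule.span_range_eq_iSup]
    exact iSup_congr hBspan
  have hlib : LinearIndependent ℝ b := by
    rw [linearIndependent_iff_card_eq_finrank_span]
    rw [Set.finrank, ← hBsup, hBrank, Fintype.card_fin]
  set s : Fin ℓ → ℝ := fun i => psiSub 1 (F i) (B i) with hsdef
  have hsge : ∀ i, psiVec (f i) (b i) ≤ s i := fun i =>
    St18.psiVec_le_psiSub_one (F i) (B i) (hF1 i) (hB1 i) (f i) (hfF i) (hf0 i)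
      (b i) (hbB i) (hb0 i)
  have hs0 : ∀ i, 0 ≤ s i := fun i => le_trans (St18.psiVec_nonneg _ _) (hsge i)
  have hsum0 : 0 ≤ ∑ i, s i := Finset.sum_nonneg fun i _ => hs0 i
  have hl0 : 0 ≤ Real.sqrt 2 * C * ∑ i, s i :=
    mul_nonneg (by positivity) hsum0
  -- the key membership
  have hmain : ∀ X ∈ ⨆ i, F i, X ≠ 0 → ∃ Y ∈ ⨆ i, B i, Y ≠ 0 ∧
      psiVec X Y ≤ Real.sqrt 2 * C * ∑ i, s i := by
    intro X hX hX0
    set a : Fin ℓ → ℝ := fun i => bF.repr ⟨X, hX⟩ i with hadef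
    have hXsum : ∑ i, a i • f i = X := by
      have h := bF.sum_repr ⟨X, hX⟩
      have h2 := congrArg (Submodule.subtype (⨆ i, F i)) h
      push_cast at h2
      simpa [hbFdef, hgdef, Module.Basis.mk_apply, hadef] using h2
    set Y : EuclideanSpace ℝ (Fin (2 * ℓ)) := ∑ i, a i • b i with hYdef
    have hYmem : Y ∈ ⨆ i, B i := Submodule.sum_mem _ fun i _ =>
      Submodule.smul_mem _ _ (Submodule.mem_iSup_of_mem i (hbB i))
    have hY0 : Y ≠ 0 := by
      intro h
      have hall := Fintype.linearIndependent_iff.mp hlib a (hYdef ▸ h)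
      apply hX0
      rw [← hXsum]
      simp [hall]
    refine ⟨Y, hYmem, hY0, ?_⟩
    have hXn : (0:ℝ) < ‖X‖ := norm_pos_iff.mpr hX0
    have hstep : ‖X - Y‖ ≤ Real.sqrt 2 * C * (∑ i, s i) * ‖X‖ := by
      have hXY : X - Y = ∑ i, a i • (f i - b i) := by
        rw [← hXsum, hYdef]
        simp [smul_sub, Finset.sum_sub_distrib]
      calc ‖X - Y‖ ≤ ∑ i, ‖a i • (f i - b i)‖ := by
            rw [hXY]; exact norm_sum_le _ _
        _ = ∑ i, |a i| * ‖f i - b i‖ := by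
            simp [norm_smul, Real.norm_eq_abs]
        _ ≤ ∑ i, (C * ‖X‖) * (Real.sqrt 2 * s i) := by
            apply Finset.sum_le_sum
            intro i _
            have ha : |a i| ≤ C * ‖X‖ := by
              have := hcoord ⟨X, hX⟩ i
              simpa [hadef] using this
            have hfb : ‖f i - b i‖ ≤ Real.sqrt 2 * s i := by
              refine le_trans
                (St18.norm_sub_le_sqrt_two_psiVec (f i) (b i) (hf1 i) (hb1 i) (hbip i)) ?_
              have := hsge i
              nlinarith [Real.sqrt_nonneg 2]
            exact mul_le_mul ha hfb (norm_nonneg _) (by positivity)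
        _ = Real.sqrt 2 * C * (∑ i, s i) * ‖X‖ := by
            have he : ∀ i, (C * ‖X‖) * (Real.sqrt 2 * s i)
                = (Real.sqrt 2 * C * ‖X‖) * s i := fun i => by ring
            simp only [he]
            rw [← Finset.mul_sum]
            ring
    calc psiVec X Y ≤ ‖X - Y‖ / ‖X‖ := St18.psiVec_le_div X Y hX0 hY0
      _ ≤ Real.sqrt 2 * C * ∑ i, s i := by
          rw [div_le_iff₀ hXn]; exact hstep
  exact csInf_le St18.psiSub_bddBelow ⟨hl0, ⨆ i, F i, le_refl _, hFrank, hmain⟩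

end
end
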